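/- arXiv:1901.10357 — 2 statements merged into one kernel-verified Lean document; each statement's English description precedes it below -/
import Mathlib

section
/- For each λ ∈ ℂ there exists a unique continuous function w_λ : (a,b) → ℂ satisfying the integral equation w_λ(x) = 1 − λ ∫_a^x (1/p(y)) (∫_a^y w_λ(ξ) r(ξ) dξ) dy for all x ∈ (a,b) (equivalently, the unique solution of ℓ(w) = λw on (a,b) with lim_{x↓a} w(x) = 1 and lim_{x↓a} w^{[1]}(x) = 0). Moreover, for each fixed x ∈ (a,b), the map λ ↦ w_λ(x) is entire (analytic on all of ℂ), and for every β ∈ (a,b) with x ≤ β it satisfies |w_λ(x)| ≤ exp(|λ|·𝒮(x)) ≤ exp(|λ|·𝒮(β)), where 𝒮(x) := ∫_a^x (𝔰(β) − 𝔰(ξ)) r(ξ) dξ with 𝔰(x) := ∫_c^x dξ/p(ξ); in particular λ ↦ w_λ(x) is of exponential type. -/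
open MeasureTheory Filter Topology
open scoped ENNReal

/-- A function is locally absolutely continuous on a set `I ⊆ ℝ` iff the fundamental theorem
of calculus holds for it between any two points of `I`. -/
def LocAC (f : ℝ → ℝ) (I : Set ℝ) : Prop :=
  ∀ x ∈ I, ∀ y ∈ I, IntervalIntegrable (deriv f) MeasureTheory.volume x y ∧
    f y - f x = ∫ t in x..y, deriv f t

namespace SL0

/-- Bundle of structural hypotheses for the Sturm–Liouville setting. -/
structure SL (I : Set ℝ) (p r : ℝ → ℝ) : Prop where
  opn : IsOpen I
  conn : Set.OrdConnected I
  pc : ContinuousOn p I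
  rc : ContinuousOn r I
  ppos : ∀ x ∈ I, 0 < p x
  rpos : ∀ x ∈ I, 0 < r x
  base : ∃ c ∈ I, MeasureTheory.IntegrableOn
      (fun y => (∫ t in y..c, (p t)⁻¹) * r y) (I ∩ Set.Iio c)
  exh : ∀ x ∈ I, ∃ t : ℕ → ℝ, Antitone t ∧ (∀ k, t k ∈ I ∩ Set.Iio x) ∧
      ∀ y ∈ I ∩ Set.Iio x, ∃ k, t k < y

variable {I : Set ℝ} {p r : ℝ → ℝ}

lemma SL.measI (S : SL I p r) : MeasurableSet I := S.opn.measurableSet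

lemma SL.measK (S : SL I p r) (x : ℝ) : MeasurableSet (I ∩ Set.Iio x) :=
  S.measI.inter measurableSet_Iio

lemma SL.uIccSub (S : SL I p r) {x y : ℝ} (hx : x ∈ I) (hy : y ∈ I) :
    Set.uIcc x y ⊆ I := S.conn.uIcc_subset hx hy

lemma SL.pinvc (S : SL I p r) : ContinuousOn (fun y => (p y)⁻¹) I :=
  S.pc.inv₀ fun x hx => (S.ppos x hx).ne'

lemma SL.pinv_nonneg (S : SL I p r) {x : ℝ} (hx : x ∈ I) : 0 ≤ (p x)⁻¹ :=
  inv_nonneg.2 (S.ppos x hx).le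

/-- Interval integrability of continuous-on-`I` functions between points of `I`. -/
lemma SL.ii (S : SL I p r) {E : Type*} [NormedAddCommGroup E] {f : ℝ → E}
    (hf : ContinuousOn f I) {x y : ℝ} (hx : x ∈ I) (hy : y ∈ I) :
    IntervalIntegrable f volume x y :=
  (hf.mono (S.uIccSub hx hy)).intervalIntegrable

lemma integral_coe (μ : Measure ℝ) (f : ℝ → ℝ) :
    ∫ x, (f x : ℂ) ∂μ = ((∫ x, f x ∂μ : ℝ) : ℂ) :=
  integral_ofReal

lemma split_set (hconn : Set.OrdConnected I) {x y : ℝ} (hx : x ∈ I) (hy : y ∈ I)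
    (hyx : y ≤ x) : I ∩ Set.Iio x = (I ∩ Set.Iio y) ∪ Set.Ico y x := by
  ext z
  constructor
  · rintro ⟨hzI, hzx⟩
    rcases lt_or_ge z y with h | h
    · exact Or.inl ⟨hzI, h⟩
    · exact Or.inr ⟨h, hzx⟩
  · rintro (⟨hzI, hzy⟩ | ⟨h1, h2⟩)
    · exact ⟨hzI, lt_of_lt_of_le hzy hyx⟩
    · exact ⟨hconn.out hy hx ⟨h1, h2.le⟩, h2⟩

lemma integral_split {E : Type*} [NormedAddCommGroup E] [NormedSpace ℝ E]
    (hconn : Set.OrdConnected I) (hm : MeasurableSet I) {f : ℝ → E}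
    {x y : ℝ} (hx : x ∈ I) (hy : y ∈ I) (hyx : y ≤ x)
    (hfi : IntegrableOn f (I ∩ Set.Iio x)) :
    ∫ ξ in I ∩ Set.Iio x, f ξ = (∫ ξ in I ∩ Set.Iio y, f ξ) + ∫ t in y..x, f t := by
  have hsplit := split_set hconn hx hy hyx
  have hdisj : Disjoint (I ∩ Set.Iio y) (Set.Ico y x) := by
    rw [Set.disjoint_left]
    rintro z ⟨_, hz⟩ ⟨hz', _⟩
    exact absurd hz' (not_le.2 hz)
  have h1 : IntegrableOn f (I ∩ Set.Iio y) := by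
    apply hfi.mono_set; rw [hsplit]; exact Set.subset_union_left
  have h2 : IntegrableOn f (Set.Ico y x) := by
    apply hfi.mono_set; rw [hsplit]; exact Set.subset_union_right
  rw [hsplit, setIntegral_union hdisj measurableSet_Ico h1 h2,
    intervalIntegral.integral_of_le hyx, integral_Ioc_eq_integral_Ioo,
    integral_Ico_eq_integral_Ioo]

/-- The indefinite integral `x ↦ ∫_{J ∩ (-∞,x)} f` of a continuous integrable function
has derivative `f x` at every point of the open order-connected set `J`. -/
lemma primitive_hasDerivAt {J : Set ℝ} (hJo : IsOpen J) (hJc : Set.OrdConnected J)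
    {E : Type*} [NormedAddCommGroup E] [NormedSpace ℝ E] [CompleteSpace E] {f : ℝ → E}
    (hfc : ContinuousOn f J) (hfi : ∀ x ∈ J, IntegrableOn f (J ∩ Set.Iio x))
    {x : ℝ} (hx : x ∈ J) :
    HasDerivAt (fun u => ∫ ξ in J ∩ Set.Iio u, f ξ) (f x) x := by
  obtain ⟨ε, hε, hball⟩ := Metric.isOpen_iff.1 hJo x hx
  set y0 := x - ε / 2 with hy0def
  have hy0 : y0 ∈ J := by
    apply hball
    rw [Metric.mem_ball, Real.dist_eq, hy0def,
      show x - ε / 2 - x = -(ε / 2) by ring, abs_neg, abs_of_pos (half_pos hε)]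
    linarith
  have hG : HasDerivAt (fun u => ∫ t in y0..u, f t) (f x) x :=
    intervalIntegral.integral_hasDerivAt_right
      ((hfc.mono (hJc.uIcc_subset hy0 hx)).intervalIntegrable)
      ⟨J, hJo.mem_nhds hx, hfc.aestronglyMeasurable hJo.measurableSet⟩
      (hfc.continuousAt (hJo.mem_nhds hx))
  have heq : (fun u => ∫ ξ in J ∩ Set.Iio u, f ξ)
      =ᶠ[𝓝 x] (fun u => (∫ ξ in J ∩ Set.Iio y0, f ξ) + ∫ t in y0..u, f t) := by
    filter_upwards [Metric.ball_mem_nhds x (half_pos hε)] with u hu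
    have huJ : u ∈ J := hball (by
      rw [Metric.mem_ball] at hu ⊢; linarith [hu])
    have hy0u : y0 ≤ u := by
      rw [Metric.mem_ball, Real.dist_eq, abs_lt] at hu
      simp only [hy0def]; linarith [hu.1]
    exact integral_split hJc hJo.measurableSet huJ hy0 hy0u (hfi u huJ)
  exact ((hG.const_add _).congr_of_eventuallyEq heq)

lemma primitive_continuousOn {J : Set ℝ} (hJo : IsOpen J) (hJc : Set.OrdConnected J)
    {E : Type*} [NormedAddCommGroup E] [NormedSpace ℝ E] [CompleteSpace E] {f : ℝ → E}
    (hfc : ContinuousOn f J) (hfi : ∀ x ∈ J, IntegrableOn f (J ∩ Set.Iio x)) :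
    ContinuousOn (fun u => ∫ ξ in J ∩ Set.Iio u, f ξ) J := fun x hx =>
  (primitive_hasDerivAt hJo hJc hfc hfi hx).continuousAt.continuousWithinAt

/-- Bound on an improper integral over `I ∩ (-∞,x)` via an antiderivative. -/
lemma SL.integral_le (S : SL I p r) {x : ℝ} (hx : x ∈ I) {f G : ℝ → ℝ}
    (hfc : ContinuousOn f I) (hfi : IntegrableOn f (I ∩ Set.Iio x))
    (hG : ∀ y ∈ I, HasDerivAt G (f y) y)
    (hG0 : ∀ y ∈ I ∩ Set.Iio x, 0 ≤ G y) :
    ∫ ξ in I ∩ Set.Iio x, f ξ ≤ G x := by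
  obtain ⟨t, ht_anti, ht_mem, ht_cof⟩ := S.exh x hx
  set s : ℕ → Set ℝ := fun k => Set.Ioo (t k) x with hs
  have hmeas : ∀ k, MeasurableSet (s k) := fun k => measurableSet_Ioo
  have hmono : Monotone s := fun k l hkl =>
    Set.Ioo_subset_Ioo (ht_anti hkl) le_rfl
  have hU : (⋃ k, s k) = I ∩ Set.Iio x := by
    apply Set.Subset.antisymm
    · refine Set.iUnion_subset fun k => ?_
      intro z hz
      exact ⟨S.conn.out (ht_mem k).1 hx ⟨hz.1.le, hz.2.le⟩, hz.2⟩
    · intro z hz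
      obtain ⟨k, hk⟩ := ht_cof z hz
      exact Set.mem_iUnion.2 ⟨k, hk, hz.2⟩
  have htendsto := tendsto_setIntegral_of_monotone hmeas hmono (hU ▸ hfi)
  rw [hU] at htendsto
  refine le_of_tendsto htendsto (Eventually.of_forall fun k => ?_)
  have htk := ht_mem k
  have hik : IntervalIntegrable f volume (t k) x := S.ii hfc htk.1 hx
  have hftc : ∫ u in (t k)..x, f u = G x - G (t k) :=
    intervalIntegral.integral_eq_sub_of_hasDerivAt
      (fun u hu => hG u (S.uIccSub htk.1 hx hu)) hik
  have : ∫ ξ in s k, f ξ = G x - G (t k) := by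
    rw [hs]
    rw [← integral_Ioc_eq_integral_Ioo, ← intervalIntegral.integral_of_le htk.2.le, hftc]
  rw [this]
  have := hG0 (t k) htk
  linarith

/-- If `f` is continuous on `I` and integrable near `a`, it is integrable on every
`I ∩ (-∞,x)`. -/
lemma SL.locglue (S : SL I p r) {c0 : ℝ} (hc0 : c0 ∈ I) {E : Type*}
    [NormedAddCommGroup E] {f : ℝ → E} (hfc : ContinuousOn f I)
    (hnear : IntegrableOn f (I ∩ Set.Iio c0)) :
    ∀ x ∈ I, IntegrableOn f (I ∩ Set.Iio x) := by
  intro x hx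
  rcases le_total x c0 with h | h
  · exact hnear.mono_set (Set.inter_subset_inter_right _ (Set.Iio_subset_Iio h))
  · rw [split_set S.conn hx hc0 h]
    refine hnear.union ?_
    have hIcc : Set.Icc c0 x ⊆ I := S.conn.out hc0 hx
    exact ((hfc.mono hIcc).integrableOn_Icc).mono_set Set.Ico_subset_Icc_self

/-- `q β ξ = ∫_ξ^β 1/p` is continuous on `I`. -/
lemma SL.q_cont (S : SL I p r) {β : ℝ} (hβ : β ∈ I) :
    ContinuousOn (fun ξ => ∫ t in ξ..β, (p t)⁻¹) I := by
  intro x hx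
  have h : HasDerivAt (fun u => ∫ t in β..u, (p t)⁻¹) ((p x)⁻¹) x :=
    intervalIntegral.integral_hasDerivAt_right (S.ii S.pinvc hβ hx)
      ⟨I, S.opn.mem_nhds hx, S.pinvc.aestronglyMeasurable S.measI⟩
      (S.pinvc.continuousAt (S.opn.mem_nhds hx))
  have heq : (fun ξ => ∫ t in ξ..β, (p t)⁻¹)
      = fun u => -(∫ t in β..u, (p t)⁻¹) :=
    funext fun u => intervalIntegral.integral_symm β u
  rw [heq]
  exact (h.continuousAt.neg).continuousWithinAt

lemma SL.q_nonneg (S : SL I p r) {ξ β : ℝ} (hξ : ξ ∈ I) (hβ : β ∈ I) (h : ξ ≤ β) :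
    0 ≤ ∫ t in ξ..β, (p t)⁻¹ :=
  intervalIntegral.integral_nonneg h fun u hu =>
    S.pinv_nonneg (S.uIccSub hξ hβ (by rw [Set.uIcc_of_le h]; exact hu))

lemma SL.q_add (S : SL I p r) {ξ z β : ℝ} (hξ : ξ ∈ I) (hz : z ∈ I) (hβ : β ∈ I) :
    (∫ t in ξ..β, (p t)⁻¹) = (∫ t in ξ..z, (p t)⁻¹) + ∫ t in z..β, (p t)⁻¹ :=
  (intervalIntegral.integral_add_adjacent_intervals (S.ii S.pinvc hξ hz)
    (S.ii S.pinvc hz hβ)).symm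

lemma SL.q_mono (S : SL I p r) {ξ y β : ℝ} (hξ : ξ ∈ I) (hy : y ∈ I) (hβ : β ∈ I)
    (hyβ : y ≤ β) :
    (∫ t in ξ..y, (p t)⁻¹) ≤ ∫ t in ξ..β, (p t)⁻¹ := by
  rw [S.q_add hξ hy hβ]
  have := S.q_nonneg hy hβ hyβ
  linarith

lemma SL.mem_left (S : SL I p r) {c : ℝ} (hc : c ∈ I) :
    ∃ c' ∈ I, c' < c := by
  obtain ⟨ε, hε, hball⟩ := Metric.isOpen_iff.1 S.opn c hc
  refine ⟨c - ε / 2, hball ?_, by linarith⟩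
  rw [Metric.mem_ball, Real.dist_eq, show c - ε / 2 - c = -(ε / 2) by ring,
    abs_neg, abs_of_pos (half_pos hε)]
  linarith

lemma SL.mem_right (S : SL I p r) {c : ℝ} (hc : c ∈ I) :
    ∃ c' ∈ I, c < c' := by
  obtain ⟨ε, hε, hball⟩ := Metric.isOpen_iff.1 S.opn c hc
  refine ⟨c + ε / 2, hball ?_, by linarith⟩
  rw [Metric.mem_ball, Real.dist_eq, show c + ε / 2 - c = ε / 2 by ring,
    abs_of_pos (half_pos hε)]
  linarith

lemma SL.r_int (S : SL I p r) : ∀ x ∈ I, IntegrableOn r (I ∩ Set.Iio x) := by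
  obtain ⟨c, hc, hbase⟩ := S.base
  obtain ⟨c', hc', hc'c⟩ := S.mem_left hc
  set δ := ∫ t in c'..c, (p t)⁻¹ with hδdef
  have hδ : 0 < δ :=
    intervalIntegral.intervalIntegral_pos_of_pos_on (S.ii S.pinvc hc' hc)
      (fun u hu => inv_pos.2 (S.ppos u (S.conn.out hc' hc ⟨hu.1.le, hu.2.le⟩)))
      hc'c
  have hnear : IntegrableOn r (I ∩ Set.Iio c') := by
    refine Integrable.mono'
      ((hbase.mono_set (Set.inter_subset_inter_right _
        (Set.Iio_subset_Iio hc'c.le))).const_mul δ⁻¹)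
      ((S.rc.mono Set.inter_subset_left).aestronglyMeasurable (S.measK c'))
      (ae_restrict_of_forall_mem (S.measK c') fun y hy => ?_)
    have hyI : y ∈ I := hy.1
    have hr0 : 0 ≤ r y := (S.rpos y hyI).le
    have hq : δ ≤ ∫ t in y..c, (p t)⁻¹ := by
      rw [S.q_add hyI hc' hc]
      have := S.q_nonneg hyI hc' hy.2.le
      linarith
    rw [Real.norm_eq_abs, abs_of_nonneg hr0, le_inv_mul_iff₀ hδ]
    exact mul_le_mul_of_nonneg_right hq hr0
  exact S.locglue hc' S.rc hnear

lemma SL.qr_int (S : SL I p r) {β : ℝ} (hβ : β ∈ I) :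
    ∀ x ∈ I, IntegrableOn (fun ξ => (∫ t in ξ..β, (p t)⁻¹) * r ξ) (I ∩ Set.Iio x) := by
  obtain ⟨c, hc, hbase⟩ := S.base
  have hcont : ContinuousOn (fun ξ => (∫ t in ξ..β, (p t)⁻¹) * r ξ) I :=
    (S.q_cont hβ).mul S.rc
  have hnear : IntegrableOn (fun ξ => (∫ t in ξ..β, (p t)⁻¹) * r ξ) (I ∩ Set.Iio c) := by
    have hint : IntegrableOn
        (fun y => (∫ t in y..c, (p t)⁻¹) * r y + (∫ t in c..β, (p t)⁻¹) * r y)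
        (I ∩ Set.Iio c) :=
      hbase.add (((S.r_int c hc)).const_mul _)
    refine hint.congr_fun (fun y hy => ?_) (S.measK c)
    rw [S.q_add hy.1 hc hβ]; ring
  exact S.locglue hc hcont hnear

/-- Tonelli's theorem on the triangle `{(y,ξ) ∈ A × A : ξ < y}`. -/
lemma tonelli_tri {A : Set ℝ} (hA : MeasurableSet A) {F G : ℝ → ℝ}
    (hF : AEMeasurable F (volume.restrict A)) (hG : AEMeasurable G (volume.restrict A)) :
    ∫⁻ y in A, ENNReal.ofReal (F y) * ∫⁻ ξ in A ∩ Set.Iio y, ENNReal.ofReal (G ξ)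
      = ∫⁻ ξ in A, (∫⁻ y in A ∩ Set.Ioi ξ, ENNReal.ofReal (F y)) * ENNReal.ofReal (G ξ) := by
  set μ := volume.restrict A with hμ
  set T : Set (ℝ × ℝ) := {z : ℝ × ℝ | z.2 < z.1} with hT
  have hTmeas : MeasurableSet T := measurableSet_lt measurable_snd measurable_fst
  set H : ℝ → ℝ → ℝ≥0∞ := fun y ξ =>
    ENNReal.ofReal (F y) * T.indicator (fun _ => (1 : ℝ≥0∞)) (y, ξ) * ENNReal.ofReal (G ξ)
    with hH
  have hHmeas : AEMeasurable (Function.uncurry H) (μ.prod μ) := by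
    have h1 : AEMeasurable (fun z : ℝ × ℝ => ENNReal.ofReal (F z.1)) (μ.prod μ) :=
      (hF.ennreal_ofReal).comp_quasiMeasurePreserving
        Measure.quasiMeasurePreserving_fst
    have h2 : AEMeasurable (fun z : ℝ × ℝ => ENNReal.ofReal (G z.2)) (μ.prod μ) :=
      (hG.ennreal_ofReal).comp_quasiMeasurePreserving
        Measure.quasiMeasurePreserving_snd
    have h3 : Measurable (T.indicator (fun _ => (1 : ℝ≥0∞))) :=
      measurable_const.indicator hTmeas
    exact (h1.mul h3.aemeasurable).mul h2
  have hLHS : ∀ y : ℝ, ENNReal.ofReal (F y) * (∫⁻ ξ in A ∩ Set.Iio y, ENNReal.ofReal (G ξ))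
      = ∫⁻ ξ, H y ξ ∂μ := by
    intro y
    have : ∫⁻ ξ in A ∩ Set.Iio y, ENNReal.ofReal (G ξ)
        = ∫⁻ ξ, (Set.Iio y).indicator (fun ξ => ENNReal.ofReal (G ξ)) ξ ∂μ := by
      rw [lintegral_indicator measurableSet_Iio, hμ,
        Measure.restrict_restrict measurableSet_Iio, Set.inter_comm]
    rw [this, ← lintegral_const_mul' _ _ ENNReal.ofReal_ne_top]
    refine lintegral_congr fun ξ => ?_
    by_cases h : ξ < y
    · rw [hH]; simp [Set.indicator_of_mem (Set.mem_Iio.2 h),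
        Set.indicator_of_mem (show ((y, ξ) : ℝ × ℝ) ∈ T from h), mul_assoc]
    · rw [hH]; simp [Set.indicator_of_notMem (fun hh => h (Set.mem_Iio.1 hh)),
        Set.indicator_of_notMem (show ((y, ξ) : ℝ × ℝ) ∉ T from h)]
  have hRHS : ∀ ξ : ℝ, (∫⁻ y in A ∩ Set.Ioi ξ, ENNReal.ofReal (F y)) * ENNReal.ofReal (G ξ)
      = ∫⁻ y, H y ξ ∂μ := by
    intro ξ
    have : ∫⁻ y in A ∩ Set.Ioi ξ, ENNReal.ofReal (F y)
        = ∫⁻ y, (Set.Ioi ξ).indicator (fun y => ENNReal.ofReal (F y)) y ∂μ := by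
      rw [lintegral_indicator measurableSet_Ioi, hμ,
        Measure.restrict_restrict measurableSet_Ioi, Set.inter_comm]
    rw [this, ← lintegral_mul_const' _ _ ENNReal.ofReal_ne_top]
    refine lintegral_congr fun y => ?_
    by_cases h : ξ < y
    · rw [hH]; simp [Set.indicator_of_mem (Set.mem_Ioi.2 h),
        Set.indicator_of_mem (show ((y, ξ) : ℝ × ℝ) ∈ T from h)]
    · rw [hH]; simp [Set.indicator_of_notMem (fun hh => h (Set.mem_Ioi.1 hh)),
        Set.indicator_of_notMem (show ((y, ξ) : ℝ × ℝ) ∉ T from h)]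
  calc ∫⁻ y in A, ENNReal.ofReal (F y) * ∫⁻ ξ in A ∩ Set.Iio y, ENNReal.ofReal (G ξ)
      = ∫⁻ y, ∫⁻ ξ, H y ξ ∂μ ∂μ := lintegral_congr fun y => hLHS y
    _ = ∫⁻ ξ, ∫⁻ y, H y ξ ∂μ ∂μ := lintegral_lintegral_swap hHmeas
    _ = ∫⁻ ξ in A, (∫⁻ y in A ∩ Set.Ioi ξ, ENNReal.ofReal (F y)) * ENNReal.ofReal (G ξ) :=
        lintegral_congr fun ξ => (hRHS ξ).symm

lemma SL.Ksub (S : SL I p r) {y z : ℝ} (hyz : y ≤ z) :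
    I ∩ Set.Iio y ⊆ I ∩ Set.Iio z :=
  Set.inter_subset_inter_right _ (Set.Iio_subset_Iio hyz)

lemma SL.Asub (S : SL I p r) {y z : ℝ} (hy : y ≤ z) :
    (I ∩ Set.Iio z) ∩ Set.Iio y = I ∩ Set.Iio y := by
  ext u
  constructor
  · rintro ⟨⟨h1, _⟩, h3⟩; exact ⟨h1, h3⟩
  · rintro ⟨h1, h2⟩; exact ⟨⟨h1, lt_of_lt_of_le h2 hy⟩, h2⟩

lemma SL.AIoi (S : SL I p r) {ξ z : ℝ} (hξ : ξ ∈ I ∩ Set.Iio z) (hz : z ∈ I) :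
    (I ∩ Set.Iio z) ∩ Set.Ioi ξ = Set.Ioo ξ z := by
  ext u
  constructor
  · rintro ⟨⟨_, h2⟩, h3⟩; exact ⟨h3, h2⟩
  · rintro ⟨h1, h2⟩
    exact ⟨⟨S.conn.out hξ.1 hz ⟨h1.le, h2.le⟩, h2⟩, h1⟩

/-- The Fubini interchange for the iterated Volterra operator, together with the
integrability statements. -/
lemma SL.fubini (S : SL I p r) {z : ℝ} (hz : z ∈ I) {f : ℝ → ℝ}
    (hfc : ContinuousOn f I) (hf0 : ∀ ξ ∈ I ∩ Set.Iio z, 0 ≤ f ξ)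
    {M : ℝ} (hM : ∀ ξ ∈ I ∩ Set.Iio z, f ξ ≤ M) :
    IntegrableOn (fun y => (p y)⁻¹ * ∫ ξ in I ∩ Set.Iio y, f ξ * r ξ) (I ∩ Set.Iio z)
    ∧ IntegrableOn (fun ξ => (∫ t in ξ..z, (p t)⁻¹) * (f ξ * r ξ)) (I ∩ Set.Iio z)
    ∧ (∫ y in I ∩ Set.Iio z, (p y)⁻¹ * ∫ ξ in I ∩ Set.Iio y, f ξ * r ξ)
        = ∫ ξ in I ∩ Set.Iio z, (∫ t in ξ..z, (p t)⁻¹) * (f ξ * r ξ) := by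
  set A := I ∩ Set.Iio z with hA
  have hAm : MeasurableSet A := S.measK z
  have hfr_cont : ContinuousOn (fun ξ => f ξ * r ξ) I := hfc.mul S.rc
  have hfr0 : ∀ ξ ∈ A, 0 ≤ f ξ * r ξ := fun ξ hξ =>
    mul_nonneg (hf0 ξ hξ) (S.rpos ξ hξ.1).le
  have hfrA : IntegrableOn (fun ξ => f ξ * r ξ) A := by
    refine Integrable.mono' ((S.r_int z hz).const_mul M)
      ((hfr_cont.mono Set.inter_subset_left).aestronglyMeasurable hAm)
      (ae_restrict_of_forall_mem hAm fun ξ hξ => ?_)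
    rw [Real.norm_eq_abs, abs_of_nonneg (hfr0 ξ hξ)]
    exact mul_le_mul_of_nonneg_right (hM ξ hξ) (S.rpos ξ hξ.1).le
  have hfr_int : ∀ y ∈ A, IntegrableOn (fun ξ => f ξ * r ξ) (I ∩ Set.Iio y) :=
    fun y hy => hfrA.mono_set (S.Ksub hy.2.le)
  have hq_nonneg : ∀ ξ ∈ A, 0 ≤ ∫ t in ξ..z, (p t)⁻¹ :=
    fun ξ hξ => S.q_nonneg hξ.1 hz hξ.2.le
  have hqfrA : IntegrableOn (fun ξ => (∫ t in ξ..z, (p t)⁻¹) * (f ξ * r ξ)) A := by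
    refine Integrable.mono' ((S.qr_int hz z hz).const_mul M)
      (((S.q_cont hz).mul hfr_cont |>.mono Set.inter_subset_left).aestronglyMeasurable hAm)
      (ae_restrict_of_forall_mem hAm fun ξ hξ => ?_)
    rw [Real.norm_eq_abs, abs_of_nonneg (mul_nonneg (hq_nonneg ξ hξ) (hfr0 ξ hξ))]
    calc (∫ t in ξ..z, (p t)⁻¹) * (f ξ * r ξ)
        ≤ (∫ t in ξ..z, (p t)⁻¹) * (M * r ξ) := by
          refine mul_le_mul_of_nonneg_left ?_ (hq_nonneg ξ hξ)
          exact mul_le_mul_of_nonneg_right (hM ξ hξ) (S.rpos ξ hξ.1).le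
      _ = M * ((∫ t in ξ..z, (p t)⁻¹) * r ξ) := by ring
  -- the inner primitive
  set v : ℝ → ℝ := fun y => ∫ ξ in I ∩ Set.Iio y, f ξ * r ξ with hv
  have hAopen : IsOpen A := S.opn.inter isOpen_Iio
  have hAconn : Set.OrdConnected A := S.conn.inter Set.ordConnected_Iio
  have hv_contA : ContinuousOn v A := by
    refine (primitive_continuousOn hAopen hAconn
      (hfr_cont.mono Set.inter_subset_left) (fun y hy => ?_)).congr (fun y hy => ?_)
    · rw [S.Asub hy.2.le]; exact hfr_int y hy
    · rw [hv]; beta_reduce; rw [S.Asub hy.2.le]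
  have hv0 : ∀ y ∈ A, 0 ≤ v y := fun y hy =>
    setIntegral_nonneg (S.measK y) fun ξ hξ => hfr0 ξ (S.Ksub hy.2.le hξ)
  have hv_eq : ∀ y ∈ A, ENNReal.ofReal (v y)
      = ∫⁻ ξ in I ∩ Set.Iio y, ENNReal.ofReal (f ξ * r ξ) := fun y hy =>
    ofReal_integral_eq_lintegral_ofReal (hfr_int y hy)
      (ae_restrict_of_forall_mem (S.measK y) fun ξ hξ => hfr0 ξ (S.Ksub hy.2.le hξ))
  -- lintegral chain
  have L1 : ∫⁻ y in A, ENNReal.ofReal ((p y)⁻¹ * v y)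
      = ∫⁻ y in A, ENNReal.ofReal ((p y)⁻¹) * ∫⁻ ξ in A ∩ Set.Iio y,
          ENNReal.ofReal (f ξ * r ξ) := by
    refine setLIntegral_congr_fun hAm (fun y hy => ?_)
    rw [ENNReal.ofReal_mul (S.pinv_nonneg hy.1), hv_eq y hy, S.Asub hy.2.le]
  have L2 := tonelli_tri hAm
    ((S.pinvc.mono Set.inter_subset_left).aemeasurable hAm)
    ((hfr_cont.mono Set.inter_subset_left).aemeasurable hAm)
  have L3 : ∫⁻ ξ in A, (∫⁻ y in A ∩ Set.Ioi ξ, ENNReal.ofReal ((p y)⁻¹))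
        * ENNReal.ofReal (f ξ * r ξ)
      = ∫⁻ ξ in A, ENNReal.ofReal ((∫ t in ξ..z, (p t)⁻¹) * (f ξ * r ξ)) := by
    refine setLIntegral_congr_fun hAm (fun ξ hξ => ?_)
    have hIoo : Set.Ioo ξ z ⊆ I := fun u hu => S.conn.out hξ.1 hz ⟨hu.1.le, hu.2.le⟩
    have hpi : IntegrableOn (fun t => (p t)⁻¹) (Set.Ioo ξ z) :=
      ((S.pinvc.mono (S.conn.out hξ.1 hz)).integrableOn_Icc).mono_set Set.Ioo_subset_Icc_self
    have h1 : ∫⁻ y in A ∩ Set.Ioi ξ, ENNReal.ofReal ((p y)⁻¹)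
        = ENNReal.ofReal (∫ t in ξ..z, (p t)⁻¹) := by
      rw [S.AIoi hξ hz,
        ← ofReal_integral_eq_lintegral_ofReal hpi
          (ae_restrict_of_forall_mem measurableSet_Ioo fun u hu =>
            S.pinv_nonneg (hIoo hu)),
        intervalIntegral.integral_of_le hξ.2.le, integral_Ioc_eq_integral_Ioo]
    rw [h1, ← ENNReal.ofReal_mul (hq_nonneg ξ hξ)]
  have L4 : ∫⁻ ξ in A, ENNReal.ofReal ((∫ t in ξ..z, (p t)⁻¹) * (f ξ * r ξ))
      = ENNReal.ofReal (∫ ξ in A, (∫ t in ξ..z, (p t)⁻¹) * (f ξ * r ξ)) :=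
    (ofReal_integral_eq_lintegral_ofReal hqfrA
      (ae_restrict_of_forall_mem hAm fun ξ hξ =>
        mul_nonneg (hq_nonneg ξ hξ) (hfr0 ξ hξ))).symm
  have Lchain : ∫⁻ y in A, ENNReal.ofReal ((p y)⁻¹ * v y)
      = ENNReal.ofReal (∫ ξ in A, (∫ t in ξ..z, (p t)⁻¹) * (f ξ * r ξ)) := by
    rw [L1, L2, L3, L4]
  have hout_nonneg : ∀ y ∈ A, 0 ≤ (p y)⁻¹ * v y := fun y hy =>
    mul_nonneg (S.pinv_nonneg hy.1) (hv0 y hy)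
  have hout_aesm : AEStronglyMeasurable (fun y => (p y)⁻¹ * v y) (volume.restrict A) :=
    ((S.pinvc.mono Set.inter_subset_left).mul hv_contA).aestronglyMeasurable hAm
  have hout_int : IntegrableOn (fun y => (p y)⁻¹ * v y) A := by
    refine ⟨hout_aesm, ?_⟩
    rw [hasFiniteIntegral_iff_ofReal (ae_restrict_of_forall_mem hAm hout_nonneg)]
    rw [Lchain]
    exact ENNReal.ofReal_lt_top
  refine ⟨hout_int, hqfrA, ?_⟩
  have hval : ∫ y in A, (p y)⁻¹ * v y
      = (∫⁻ y in A, ENNReal.ofReal ((p y)⁻¹ * v y)).toReal :=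
    integral_eq_lintegral_of_nonneg_ae (ae_restrict_of_forall_mem hAm hout_nonneg)
      hout_aesm
  rw [hval, Lchain, ENNReal.toReal_ofReal]
  exact setIntegral_nonneg hAm fun ξ hξ => mul_nonneg (hq_nonneg ξ hξ) (hfr0 ξ hξ)

/-- `𝒮_β(x) = ∫_a^x (∫_ξ^β 1/p) r(ξ) dξ`. -/
noncomputable def Sb (I : Set ℝ) (p r : ℝ → ℝ) (β x : ℝ) : ℝ :=
  ∫ ξ in I ∩ Set.Iio x, (∫ t in ξ..β, (p t)⁻¹) * r ξ

lemma SL.Sb_hasDeriv (S : SL I p r) {β x : ℝ} (hβ : β ∈ I) (hx : x ∈ I) :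
    HasDerivAt (Sb I p r β) ((∫ t in x..β, (p t)⁻¹) * r x) x :=
  primitive_hasDerivAt S.opn S.conn ((S.q_cont hβ).mul S.rc)
    (fun x' hx' => S.qr_int hβ x' hx') hx

lemma SL.Sb_contOn (S : SL I p r) {β : ℝ} (hβ : β ∈ I) :
    ContinuousOn (Sb I p r β) I := fun x hx =>
  (S.Sb_hasDeriv hβ hx).continuousAt.continuousWithinAt

lemma SL.Sb_nonneg (S : SL I p r) {β x : ℝ} (hβ : β ∈ I) (hx : x ∈ I) (hxβ : x ≤ β) :
    0 ≤ Sb I p r β x :=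
  setIntegral_nonneg (S.measK x) fun ξ hξ =>
    mul_nonneg (S.q_nonneg hξ.1 hβ (le_trans hξ.2.le hxβ)) (S.rpos ξ hξ.1).le

lemma SL.Sb_mono (S : SL I p r) {β x y : ℝ} (hβ : β ∈ I) (hy : y ∈ I) (hx : x ∈ I)
    (hyx : y ≤ x) (hxβ : x ≤ β) : Sb I p r β y ≤ Sb I p r β x :=
  setIntegral_mono_set (S.qr_int hβ x hx)
    (ae_restrict_of_forall_mem (S.measK x) fun ξ hξ =>
      mul_nonneg (S.q_nonneg hξ.1 hβ (le_trans hξ.2.le hxβ)) (S.rpos ξ hξ.1).le)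
    ((S.Ksub hyx).eventuallyLE)

lemma SL.norm_pinv (S : SL I p r) {η : ℝ} (hη : η ∈ I) :
    ‖((p η : ℂ))⁻¹‖ = (p η)⁻¹ := by
  rw [norm_inv, Complex.norm_real, Real.norm_eq_abs, abs_of_pos (S.ppos η hη)]

/-- The key estimate: one application of the Volterra operator improves the
factorial bound by one step. -/
lemma SL.key (S : SL I p r) {β y : ℝ} (hβ : β ∈ I) (hy : y ∈ I) (hyβ : y ≤ β)
    {f : ℝ → ℂ} (hfc : ContinuousOn f I)
    {n : ℕ} {c : ℝ} (hc : 0 ≤ c)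
    (hbound : ∀ ξ ∈ I ∩ Set.Iio y, ‖f ξ‖ ≤ c * (Sb I p r β ξ) ^ n / n.factorial) :
    ‖∫ η in I ∩ Set.Iio y, ((p η : ℂ))⁻¹ * ∫ ξ in I ∩ Set.Iio η, f ξ * (r ξ : ℂ)‖
      ≤ c * (Sb I p r β y) ^ (n + 1) / (n + 1).factorial := by
  set Φ : ℝ → ℝ := Sb I p r β with hΦdef
  have hfact : (0 : ℝ) < (n.factorial : ℝ) := by positivity
  have hΦ_nonneg : ∀ ξ ∈ I, ξ ≤ β → 0 ≤ Φ ξ := fun ξ hξ h => S.Sb_nonneg hβ hξ h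
  have hΦ_mono : ∀ ξ ∈ I ∩ Set.Iio y, Φ ξ ≤ Φ y := fun ξ hξ =>
    S.Sb_mono hβ hξ.1 hy hξ.2.le hyβ
  set M : ℝ := c * (Φ y) ^ n / n.factorial with hM
  have hM0 : 0 ≤ M := by
    apply div_nonneg _ hfact.le
    exact mul_nonneg hc (pow_nonneg (hΦ_nonneg y hy hyβ) n)
  have hgb : ∀ ξ ∈ I ∩ Set.Iio y, ‖f ξ‖ ≤ M := fun ξ hξ => by
    refine le_trans (hbound ξ hξ) ?_
    rw [hM]
    refine (div_le_div_iff_of_pos_right hfact).2 ?_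
    exact mul_le_mul_of_nonneg_left
      (pow_le_pow_left₀ (hΦ_nonneg ξ hξ.1 (le_trans hξ.2.le hyβ)) (hΦ_mono ξ hξ) n) hc
  obtain ⟨hint1, hint2, heq⟩ := S.fubini hy (hfc.norm)
    (fun ξ _ => norm_nonneg _) hgb
  -- pointwise norm bound on the outer integrand
  have hptw : ∀ η ∈ I ∩ Set.Iio y,
      ‖((p η : ℂ))⁻¹ * ∫ ξ in I ∩ Set.Iio η, f ξ * (r ξ : ℂ)‖
        ≤ (p η)⁻¹ * ∫ ξ in I ∩ Set.Iio η, ‖f ξ‖ * r ξ := by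
    intro η hη
    rw [norm_mul, S.norm_pinv hη.1]
    refine mul_le_mul_of_nonneg_left ?_ (S.pinv_nonneg hη.1)
    refine le_trans (norm_integral_le_integral_norm _) (le_of_eq ?_)
    refine setIntegral_congr_fun (S.measK η) fun ξ hξ => ?_
    rw [norm_mul, Complex.norm_real, Real.norm_eq_abs,
      abs_of_nonneg (S.rpos ξ hξ.1).le]
  have hstep1 : ‖∫ η in I ∩ Set.Iio y, ((p η : ℂ))⁻¹
        * ∫ ξ in I ∩ Set.Iio η, f ξ * (r ξ : ℂ)‖
      ≤ ∫ η in I ∩ Set.Iio y, (p η)⁻¹ * ∫ ξ in I ∩ Set.Iio η, ‖f ξ‖ * r ξ :=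
    norm_integral_le_of_norm_le hint1 (ae_restrict_of_forall_mem (S.measK y) hptw)
  -- monotone comparison with the differentiable majorant
  set F : ℝ → ℝ := fun ξ => (∫ t in ξ..β, (p t)⁻¹) * ((c * Φ ξ ^ n / n.factorial) * r ξ)
    with hF
  have hF_cont : ContinuousOn F I := by
    refine (S.q_cont hβ).mul (ContinuousOn.mul ?_ S.rc)
    exact (continuousOn_const.mul ((S.Sb_contOn hβ).pow n)).div_const _
  have hF_nonneg : ∀ ξ ∈ I, ξ ≤ β → 0 ≤ F ξ := by
    intro ξ hξ h
    refine mul_nonneg (S.q_nonneg hξ hβ h) (mul_nonneg ?_ (S.rpos ξ hξ).le)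
    exact div_nonneg (mul_nonneg hc (pow_nonneg (hΦ_nonneg ξ hξ h) n)) hfact.le
  have hF_int : IntegrableOn F (I ∩ Set.Iio y) := by
    refine Integrable.mono' ((S.qr_int hβ y hy).const_mul M)
      ((hF_cont.mono Set.inter_subset_left).aestronglyMeasurable (S.measK y))
      (ae_restrict_of_forall_mem (S.measK y) fun ξ hξ => ?_)
    have hξβ : ξ ≤ β := le_trans hξ.2.le hyβ
    rw [Real.norm_eq_abs, abs_of_nonneg (hF_nonneg ξ hξ.1 hξβ), hF]
    calc (∫ t in ξ..β, (p t)⁻¹) * ((c * Φ ξ ^ n / n.factorial) * r ξ)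
        ≤ (∫ t in ξ..β, (p t)⁻¹) * (M * r ξ) := by
          refine mul_le_mul_of_nonneg_left ?_ (S.q_nonneg hξ.1 hβ hξβ)
          refine mul_le_mul_of_nonneg_right ?_ (S.rpos ξ hξ.1).le
          rw [hM]
          refine (div_le_div_iff_of_pos_right hfact).2 ?_
          exact mul_le_mul_of_nonneg_left
            (pow_le_pow_left₀ (hΦ_nonneg ξ hξ.1 hξβ) (hΦ_mono ξ hξ) n) hc
      _ = M * ((∫ t in ξ..β, (p t)⁻¹) * r ξ) := by ring
  have hstep2 : (∫ ξ in I ∩ Set.Iio y, (∫ t in ξ..y, (p t)⁻¹) * (‖f ξ‖ * r ξ))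
      ≤ ∫ ξ in I ∩ Set.Iio y, F ξ := by
    refine setIntegral_mono_on hint2 hF_int (S.measK y) fun ξ hξ => ?_
    have hξβ : ξ ≤ β := le_trans hξ.2.le hyβ
    rw [hF]
    refine mul_le_mul (S.q_mono hξ.1 hy hβ hyβ) ?_
      (mul_nonneg (norm_nonneg _) (S.rpos ξ hξ.1).le) (S.q_nonneg hξ.1 hβ hξβ)
    exact mul_le_mul_of_nonneg_right (hbound ξ hξ) (S.rpos ξ hξ.1).le
  -- FTC bound
  set G : ℝ → ℝ := fun u => c * Φ u ^ (n + 1) / (n + 1).factorial with hG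
  have hG_deriv : ∀ u ∈ I, HasDerivAt G (F u) u := by
    intro u hu
    have hΦd : HasDerivAt Φ ((∫ t in u..β, (p t)⁻¹) * r u) u := S.Sb_hasDeriv hβ hu
    have h1 := ((hΦd.pow (n + 1)).const_mul c).div_const ((n + 1).factorial : ℝ)
    refine h1.congr_deriv ?_
    rw [hF]
    have hfs : ((n + 1).factorial : ℝ) = (n + 1) * n.factorial := by
      rw [Nat.factorial_succ]; push_cast; ring
    rw [Nat.add_sub_cancel, hfs]; push_cast
    field_simp [hfs]
  have hG0 : ∀ u ∈ I ∩ Set.Iio y, 0 ≤ G u := by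
    intro u hu
    have : u ≤ β := le_trans hu.2.le hyβ
    exact div_nonneg (mul_nonneg hc (pow_nonneg (hΦ_nonneg u hu.1 this) (n + 1)))
      (by positivity)
  have hstep3 : (∫ ξ in I ∩ Set.Iio y, F ξ) ≤ G y :=
    S.integral_le hy hF_cont hF_int hG_deriv hG0
  calc ‖∫ η in I ∩ Set.Iio y, ((p η : ℂ))⁻¹ * ∫ ξ in I ∩ Set.Iio η, f ξ * (r ξ : ℂ)‖
      ≤ ∫ η in I ∩ Set.Iio y, (p η)⁻¹ * ∫ ξ in I ∩ Set.Iio η, ‖f ξ‖ * r ξ := hstep1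
    _ = ∫ ξ in I ∩ Set.Iio y, (∫ t in ξ..y, (p t)⁻¹) * (‖f ξ‖ * r ξ) := heq
    _ ≤ ∫ ξ in I ∩ Set.Iio y, F ξ := hstep2
    _ ≤ G y := hstep3

/-- The Picard iterates `u_0 = 1`, `u_{n+1}(x) = ∫_a^x (1/p) ∫_a^y u_n r`. -/
noncomputable def pic (I : Set ℝ) (p r : ℝ → ℝ) : ℕ → ℝ → ℝ
  | 0 => fun _ => 1
  | n + 1 => fun x =>
      ∫ y in I ∩ Set.Iio x, (p y)⁻¹ * ∫ ξ in I ∩ Set.Iio y, pic I p r n ξ * r ξ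

lemma SL.pic_props (S : SL I p r) : ∀ n : ℕ,
    ContinuousOn (pic I p r n) I ∧ (∀ x ∈ I, 0 ≤ pic I p r n x) ∧
    (∀ β ∈ I, ∀ x ∈ I, x ≤ β →
      pic I p r n x ≤ (Sb I p r β x) ^ n / n.factorial) := by
  intro n
  induction n with
  | zero =>
    refine ⟨continuousOn_const, fun x _ => zero_le_one, fun β hβ x hx hxβ => ?_⟩
    simp [pic]
  | succ n ih =>
    obtain ⟨hA, hB, hC⟩ := ih
    -- boundedness of `u_n` below any point of `I`
    have hbnd : ∀ z ∈ I, ∀ ξ ∈ I ∩ Set.Iio z,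
        pic I p r n ξ ≤ (Sb I p r z z) ^ n / n.factorial := by
      intro z hz ξ hξ
      refine le_trans (hC z hz ξ hξ.1 hξ.2.le) ?_
      have h0 : 0 ≤ Sb I p r z ξ := S.Sb_nonneg hz hξ.1 hξ.2.le
      refine (div_le_div_iff_of_pos_right (by positivity)).2 ?_
      exact pow_le_pow_left₀ h0 (S.Sb_mono hz hξ.1 hz hξ.2.le le_rfl) n
    have hpr_cont : ContinuousOn (fun ξ => pic I p r n ξ * r ξ) I := hA.mul S.rc
    have hpr_int : ∀ z ∈ I, IntegrableOn (fun ξ => pic I p r n ξ * r ξ)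
        (I ∩ Set.Iio z) := by
      intro z hz
      refine Integrable.mono' ((S.r_int z hz).const_mul ((Sb I p r z z) ^ n / n.factorial))
        ((hpr_cont.mono Set.inter_subset_left).aestronglyMeasurable (S.measK z))
        (ae_restrict_of_forall_mem (S.measK z) fun ξ hξ => ?_)
      rw [Real.norm_eq_abs, abs_of_nonneg (mul_nonneg (hB ξ hξ.1) (S.rpos ξ hξ.1).le)]
      exact mul_le_mul_of_nonneg_right (hbnd z hz ξ hξ) (S.rpos ξ hξ.1).le
    have hfub : ∀ z ∈ I,
        IntegrableOn (fun y => (p y)⁻¹ * ∫ ξ in I ∩ Set.Iio y, pic I p r n ξ * r ξ)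
          (I ∩ Set.Iio z) := fun z hz =>
      (S.fubini hz hA (fun ξ hξ => hB ξ hξ.1) (hbnd z hz)).1
    have hv_cont : ContinuousOn
        (fun y => ∫ ξ in I ∩ Set.Iio y, pic I p r n ξ * r ξ) I :=
      primitive_continuousOn S.opn S.conn hpr_cont hpr_int
    have hout_cont : ContinuousOn
        (fun y => (p y)⁻¹ * ∫ ξ in I ∩ Set.Iio y, pic I p r n ξ * r ξ) I :=
      S.pinvc.mul hv_cont
    have hA' : ContinuousOn (pic I p r (n + 1)) I := by
      have := primitive_continuousOn S.opn S.conn hout_cont hfub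
      exact this.congr fun x hx => by rw [pic]
    have hB' : ∀ x ∈ I, 0 ≤ pic I p r (n + 1) x := by
      intro x hx
      rw [pic]
      refine setIntegral_nonneg (S.measK x) fun y hy => ?_
      refine mul_nonneg (S.pinv_nonneg hy.1) ?_
      exact setIntegral_nonneg (S.measK y) fun ξ hξ =>
        mul_nonneg (hB ξ hξ.1) (S.rpos ξ hξ.1).le
    refine ⟨hA', hB', fun β hβ x hx hxβ => ?_⟩
    -- complexify and use the key estimate
    have hcoe : ((pic I p r (n + 1) x : ℝ) : ℂ)
        = ∫ η in I ∩ Set.Iio x, ((p η : ℂ))⁻¹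
            * ∫ ξ in I ∩ Set.Iio η, ((pic I p r n ξ : ℝ) : ℂ) * (r ξ : ℂ) := by
      rw [pic]
      beta_reduce
      rw [← integral_coe]
      refine setIntegral_congr_fun (S.measK x) fun η hη => ?_
      rw [Complex.ofReal_mul, Complex.ofReal_inv]
      congr 1
      rw [← integral_coe]
      refine setIntegral_congr_fun (S.measK η) fun ξ hξ => ?_
      push_cast
      ring
    have hkey := S.key hβ hx hxβ
      (Complex.continuous_ofReal.comp_continuousOn hA)
      (zero_le_one) (f := fun ξ => ((pic I p r n ξ : ℝ) : ℂ)) (n := n) (c := 1)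
      (fun ξ hξ => by
        rw [Complex.norm_real, Real.norm_eq_abs, abs_of_nonneg (hB ξ hξ.1), one_mul]
        exact hC β hβ ξ hξ.1 (le_trans hξ.2.le hxβ))
    rw [← hcoe, Complex.norm_real, Real.norm_eq_abs, one_mul] at hkey
    exact le_trans (le_abs_self _) hkey

lemma exp_tsum (y : ℝ) : (∑' n : ℕ, y ^ n / n.factorial) = Real.exp y := by
  rw [Real.exp_eq_exp_ℝ, NormedSpace.exp_eq_tsum_div]

/-- The solution `w_λ` as a power series in `λ`. -/
noncomputable def WW (I : Set ℝ) (p r : ℝ → ℝ) (lam : ℂ) (x : ℝ) : ℂ :=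
  ∑' n : ℕ, (-lam) ^ n * (pic I p r n x : ℂ)

lemma SL.term_bound (S : SL I p r) (lam : ℂ) {β x : ℝ} (hβ : β ∈ I) (hx : x ∈ I)
    (hxβ : x ≤ β) (n : ℕ) :
    ‖(-lam) ^ n * (pic I p r n x : ℂ)‖ ≤ (‖lam‖ * Sb I p r β x) ^ n / n.factorial := by
  obtain ⟨_, hB, hC⟩ := S.pic_props n
  rw [norm_mul, norm_pow, norm_neg, Complex.norm_real, Real.norm_eq_abs,
    abs_of_nonneg (hB x hx), mul_pow, mul_div_assoc]
  exact mul_le_mul_of_nonneg_left (hC β hβ x hx hxβ) (pow_nonneg (norm_nonneg _) n)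

lemma SL.W_norm_summable (S : SL I p r) (lam : ℂ) {β x : ℝ} (hβ : β ∈ I) (hx : x ∈ I)
    (hxβ : x ≤ β) :
    Summable (fun n : ℕ => ‖(-lam) ^ n * (pic I p r n x : ℂ)‖) :=
  Summable.of_nonneg_of_le (fun n => norm_nonneg _)
    (fun n => S.term_bound lam hβ hx hxβ n)
    (Real.summable_pow_div_factorial (‖lam‖ * Sb I p r β x))

lemma SL.W_summable (S : SL I p r) (lam : ℂ) {x : ℝ} (hx : x ∈ I) :
    Summable (fun n : ℕ => (-lam) ^ n * (pic I p r n x : ℂ)) :=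
  (S.W_norm_summable lam hx hx le_rfl).of_norm

lemma SL.W_bound (S : SL I p r) (lam : ℂ) {β x : ℝ} (hβ : β ∈ I) (hx : x ∈ I)
    (hxβ : x ≤ β) :
    ‖WW I p r lam x‖ ≤ Real.exp (‖lam‖ * Sb I p r β x) := by
  refine le_trans (norm_tsum_le_tsum_norm (S.W_norm_summable lam hβ hx hxβ)) ?_
  rw [← exp_tsum]
  exact Summable.tsum_le_tsum (fun n => S.term_bound lam hβ hx hxβ n)
    (S.W_norm_summable lam hβ hx hxβ)
    (Real.summable_pow_div_factorial (‖lam‖ * Sb I p r β x))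

lemma SL.W_contOn (S : SL I p r) (lam : ℂ) : ContinuousOn (WW I p r lam) I := by
  intro x hx
  obtain ⟨β, hβ, hxβ⟩ := S.mem_right hx
  set s := I ∩ Set.Iio β with hs
  have hcont : ContinuousOn (WW I p r lam) s := by
    refine continuousOn_tsum (fun n => ?_)
      (Real.summable_pow_div_factorial (‖lam‖ * Sb I p r β β)) (fun n ξ hξ => ?_)
    · exact (continuousOn_const.mul
        (Complex.continuous_ofReal.comp_continuousOn (S.pic_props n).1)).mono
        Set.inter_subset_left
    · refine le_trans (S.term_bound lam hβ hξ.1 hξ.2.le n) ?_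
      have h1 : 0 ≤ Sb I p r β ξ := S.Sb_nonneg hβ hξ.1 hξ.2.le
      refine (div_le_div_iff_of_pos_right (by positivity)).2 ?_
      refine pow_le_pow_left₀ (mul_nonneg (norm_nonneg _) h1) ?_ n
      exact mul_le_mul_of_nonneg_left
        (S.Sb_mono hβ hξ.1 hβ hξ.2.le le_rfl) (norm_nonneg _)
  have hmem : s ∈ 𝓝[I] x :=
    Filter.inter_mem self_mem_nhdsWithin
      (mem_nhdsWithin_of_mem_nhds (Iio_mem_nhds hxβ))
  exact (hcont.continuousWithinAt ⟨hx, hxβ⟩).mono_of_mem_nhdsWithin hmem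

lemma SL.Wr_int (S : SL I p r) (lam : ℂ) {x : ℝ} (hx : x ∈ I) :
    IntegrableOn (fun ξ => WW I p r lam ξ * (r ξ : ℂ)) (I ∩ Set.Iio x) := by
  refine Integrable.mono'
    ((S.r_int x hx).const_mul (Real.exp (‖lam‖ * Sb I p r x x)))
    ((((S.W_contOn lam).mul
      (Complex.continuous_ofReal.comp_continuousOn S.rc)).mono
        Set.inter_subset_left).aestronglyMeasurable (S.measK x))
    (ae_restrict_of_forall_mem (S.measK x) fun ξ hξ => ?_)
  rw [norm_mul, Complex.norm_real, Real.norm_eq_abs, abs_of_nonneg (S.rpos ξ hξ.1).le]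
  refine mul_le_mul_of_nonneg_right ?_ (S.rpos ξ hξ.1).le
  refine le_trans (S.W_bound lam hx hξ.1 hξ.2.le) ?_
  refine Real.exp_le_exp.2 (mul_le_mul_of_nonneg_left ?_ (norm_nonneg _))
  exact S.Sb_mono hx hξ.1 hx hξ.2.le le_rfl

lemma SL.pinvR_int (S : SL I p r) {x : ℝ} (hx : x ∈ I) :
    IntegrableOn (fun y => (p y)⁻¹ * ∫ ξ in I ∩ Set.Iio y, r ξ) (I ∩ Set.Iio x) := by
  have h := (S.fubini hx (f := fun _ => 1) continuousOn_const
    (fun _ _ => zero_le_one) (M := 1) (fun _ _ => le_rfl)).1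
  refine h.congr_fun (fun y hy => ?_) (S.measK x)
  congr 1
  simp only [one_mul]

lemma SL.Wouter_int (S : SL I p r) (lam : ℂ) {x : ℝ} (hx : x ∈ I) :
    IntegrableOn
      (fun y => ((p y : ℂ))⁻¹ * ∫ ξ in I ∩ Set.Iio y, WW I p r lam ξ * (r ξ : ℂ))
      (I ∩ Set.Iio x) := by
  set C : ℝ := Real.exp (‖lam‖ * Sb I p r x x) with hC
  have hvW_cont : ContinuousOn
      (fun y => ∫ ξ in I ∩ Set.Iio y, WW I p r lam ξ * (r ξ : ℂ)) I :=
    primitive_continuousOn S.opn S.conn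
      ((S.W_contOn lam).mul (Complex.continuous_ofReal.comp_continuousOn S.rc))
      (fun y hy => S.Wr_int lam hy)
  refine Integrable.mono' ((S.pinvR_int hx).const_mul C)
    (((((Complex.continuous_ofReal.comp_continuousOn S.pc).inv₀
        (fun y hy => by
          simp only [Function.comp_apply, ne_eq, Complex.ofReal_eq_zero]
          exact (S.ppos y hy).ne')).mul hvW_cont).mono
      Set.inter_subset_left).aestronglyMeasurable (S.measK x))
    (ae_restrict_of_forall_mem (S.measK x) fun y hy => ?_)
  rw [norm_mul, S.norm_pinv hy.1]
  have h1 : ‖∫ ξ in I ∩ Set.Iio y, WW I p r lam ξ * (r ξ : ℂ)‖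
      ≤ ∫ ξ in I ∩ Set.Iio y, C * r ξ := by
    refine norm_integral_le_of_norm_le (((S.r_int y hy.1)).const_mul C)
      (ae_restrict_of_forall_mem (S.measK y) fun ξ hξ => ?_)
    rw [norm_mul, Complex.norm_real, Real.norm_eq_abs, abs_of_nonneg (S.rpos ξ hξ.1).le]
    refine mul_le_mul_of_nonneg_right ?_ (S.rpos ξ hξ.1).le
    have hξx : ξ ≤ x := le_trans hξ.2.le hy.2.le
    refine le_trans (S.W_bound lam hx hξ.1 hξx) ?_
    refine Real.exp_le_exp.2 (mul_le_mul_of_nonneg_left ?_ (norm_nonneg _))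
    exact S.Sb_mono hx hξ.1 hx hξx le_rfl
  calc (p y)⁻¹ * ‖∫ ξ in I ∩ Set.Iio y, WW I p r lam ξ * (r ξ : ℂ)‖
      ≤ (p y)⁻¹ * (C * ∫ ξ in I ∩ Set.Iio y, r ξ) := by
        refine mul_le_mul_of_nonneg_left ?_ (S.pinv_nonneg hy.1)
        rw [← integral_const_mul]
        exact h1
    _ = C * ((p y)⁻¹ * ∫ ξ in I ∩ Set.Iio y, r ξ) := by ring

lemma SL.vW_eq (S : SL I p r) (lam : ℂ) {y : ℝ} (hy : y ∈ I) :
    (∫ ξ in I ∩ Set.Iio y, WW I p r lam ξ * (r ξ : ℂ))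
      = ∑' n : ℕ, (-lam) ^ n
          * ((∫ ξ in I ∩ Set.Iio y, pic I p r n ξ * r ξ : ℝ) : ℂ) := by
  set f : ℕ → ℝ → ℂ := fun n ξ => (-lam) ^ n * (((pic I p r n ξ : ℝ) : ℂ) * (r ξ : ℂ))
    with hf
  have hcongr : ∀ ξ ∈ I ∩ Set.Iio y, WW I p r lam ξ * (r ξ : ℂ) = ∑' n, f n ξ := by
    intro ξ _
    rw [WW, ← tsum_mul_right]
    exact tsum_congr fun n => by rw [hf]; ring
  rw [setIntegral_congr_fun (S.measK y) hcongr]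
  have haesm : ∀ n : ℕ, AEStronglyMeasurable (f n) (volume.restrict (I ∩ Set.Iio y)) := by
    intro n
    refine ((continuousOn_const.mul
      ((Complex.continuous_ofReal.comp_continuousOn (S.pic_props n).1).mul
        (Complex.continuous_ofReal.comp_continuousOn S.rc))).mono
      Set.inter_subset_left).aestronglyMeasurable (S.measK y)
  have hbnd : ∀ n : ℕ, ∀ ξ ∈ I ∩ Set.Iio y,
      pic I p r n ξ ≤ (Sb I p r y y) ^ n / n.factorial := by
    intro n ξ hξ
    obtain ⟨_, hB, hC⟩ := S.pic_props n
    refine le_trans (hC y hy ξ hξ.1 hξ.2.le) ?_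
    refine (div_le_div_iff_of_pos_right (by positivity)).2 ?_
    exact pow_le_pow_left₀ (S.Sb_nonneg hy hξ.1 hξ.2.le)
      (S.Sb_mono hy hξ.1 hy hξ.2.le le_rfl) n
  have hpr_int : ∀ n : ℕ, IntegrableOn (fun ξ => pic I p r n ξ * r ξ)
      (I ∩ Set.Iio y) := by
    intro n
    obtain ⟨hA, hB, _⟩ := S.pic_props n
    refine Integrable.mono'
      ((S.r_int y hy).const_mul ((Sb I p r y y) ^ n / n.factorial))
      (((hA.mul S.rc).mono Set.inter_subset_left).aestronglyMeasurable (S.measK y))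
      (ae_restrict_of_forall_mem (S.measK y) fun ξ hξ => ?_)
    rw [Real.norm_eq_abs, abs_of_nonneg (mul_nonneg (hB ξ hξ.1) (S.rpos ξ hξ.1).le)]
    exact mul_le_mul_of_nonneg_right (hbnd n ξ hξ) (S.rpos ξ hξ.1).le
  have hlint : ∀ n : ℕ, (∫⁻ ξ in I ∩ Set.Iio y, ‖f n ξ‖₊)
      = ENNReal.ofReal (‖lam‖ ^ n * ∫ ξ in I ∩ Set.Iio y, pic I p r n ξ * r ξ) := by
    intro n
    obtain ⟨_, hB, _⟩ := S.pic_props n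
    have h1 : ∀ ξ ∈ I ∩ Set.Iio y, (‖f n ξ‖₊ : ℝ≥0∞)
        = ENNReal.ofReal (‖lam‖ ^ n * (pic I p r n ξ * r ξ)) := by
      intro ξ hξ
      rw [← enorm_eq_nnnorm, ← ofReal_norm]
      congr 1
      rw [hf]
      beta_reduce
      rw [norm_mul, norm_mul, norm_pow, norm_neg, Complex.norm_real, Complex.norm_real,
        Real.norm_eq_abs, Real.norm_eq_abs, abs_of_nonneg (hB ξ hξ.1),
        abs_of_nonneg (S.rpos ξ hξ.1).le]
    rw [setLIntegral_congr_fun (S.measK y) h1,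
      ← ofReal_integral_eq_lintegral_ofReal ((hpr_int n).const_mul (‖lam‖ ^ n))
        (ae_restrict_of_forall_mem (S.measK y) fun ξ hξ =>
          mul_nonneg (by positivity)
            (mul_nonneg (hB ξ hξ.1) (S.rpos ξ hξ.1).le)),
      integral_const_mul]
  set Ry : ℝ := ∫ ξ in I ∩ Set.Iio y, r ξ with hRy
  have hRy0 : 0 ≤ Ry :=
    setIntegral_nonneg (S.measK y) fun ξ hξ => (S.rpos ξ hξ.1).le
  have hv_nonneg : ∀ n : ℕ, 0 ≤ ∫ ξ in I ∩ Set.Iio y, pic I p r n ξ * r ξ := by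
    intro n
    obtain ⟨_, hB, _⟩ := S.pic_props n
    exact setIntegral_nonneg (S.measK y) fun ξ hξ =>
      mul_nonneg (hB ξ hξ.1) (S.rpos ξ hξ.1).le
  have hv_le : ∀ n : ℕ, (∫ ξ in I ∩ Set.Iio y, pic I p r n ξ * r ξ)
      ≤ (Sb I p r y y) ^ n / n.factorial * Ry := by
    intro n
    have h2 : (∫ ξ in I ∩ Set.Iio y, pic I p r n ξ * r ξ)
        ≤ ∫ ξ in I ∩ Set.Iio y, (Sb I p r y y) ^ n / n.factorial * r ξ := by
      refine setIntegral_mono_on (hpr_int n)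
        ((S.r_int y hy).const_mul _) (S.measK y) fun ξ hξ => ?_
      exact mul_le_mul_of_nonneg_right (hbnd n ξ hξ) (S.rpos ξ hξ.1).le
    rwa [integral_const_mul] at h2
  have hGsum : Summable (fun n : ℕ => (‖lam‖ * Sb I p r y y) ^ n / n.factorial * Ry) :=
    (Real.summable_pow_div_factorial _).mul_right Ry
  have hG0 : ∀ n : ℕ, 0 ≤ (‖lam‖ * Sb I p r y y) ^ n / n.factorial * Ry := by
    intro n
    have := S.Sb_nonneg hy hy le_rfl
    positivity
  have hne : (∑' n : ℕ, ∫⁻ ξ in I ∩ Set.Iio y, ‖f n ξ‖₊) ≠ ⊤ := by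
    rw [tsum_congr hlint]
    have hle : (∑' n : ℕ,
          ENNReal.ofReal (‖lam‖ ^ n * ∫ ξ in I ∩ Set.Iio y, pic I p r n ξ * r ξ))
        ≤ ∑' n : ℕ, ENNReal.ofReal ((‖lam‖ * Sb I p r y y) ^ n / n.factorial * Ry) := by
      refine ENNReal.tsum_le_tsum fun n => ENNReal.ofReal_le_ofReal ?_
      calc ‖lam‖ ^ n * ∫ ξ in I ∩ Set.Iio y, pic I p r n ξ * r ξ
          ≤ ‖lam‖ ^ n * ((Sb I p r y y) ^ n / n.factorial * Ry) :=
            mul_le_mul_of_nonneg_left (hv_le n) (by positivity)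
        _ = (‖lam‖ * Sb I p r y y) ^ n / n.factorial * Ry := by
            rw [mul_pow]; ring
    refine ne_of_lt (lt_of_le_of_lt hle ?_)
    rw [← ENNReal.ofReal_tsum_of_nonneg hG0 hGsum]
    exact ENNReal.ofReal_lt_top
  rw [integral_tsum haesm hne]
  refine tsum_congr fun n => ?_
  rw [hf]
  beta_reduce
  rw [integral_const_mul]
  congr 1
  rw [setIntegral_congr_fun (S.measK y)
    (fun ξ _ => (Complex.ofReal_mul (pic I p r n ξ) (r ξ)).symm), integral_coe]

lemma SL.pic_le (S : SL I p r) (n : ℕ) {z : ℝ} (hz : z ∈ I) :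
    ∀ ξ ∈ I ∩ Set.Iio z, pic I p r n ξ ≤ (Sb I p r z z) ^ n / n.factorial := by
  intro ξ hξ
  obtain ⟨_, hB, hC⟩ := S.pic_props n
  refine le_trans (hC z hz ξ hξ.1 hξ.2.le) ?_
  refine (div_le_div_iff_of_pos_right (by positivity)).2 ?_
  exact pow_le_pow_left₀ (S.Sb_nonneg hz hξ.1 hξ.2.le)
    (S.Sb_mono hz hξ.1 hz hξ.2.le le_rfl) n

lemma SL.picr_int (S : SL I p r) (n : ℕ) {z : ℝ} (hz : z ∈ I) :
    IntegrableOn (fun ξ => pic I p r n ξ * r ξ) (I ∩ Set.Iio z) := by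
  obtain ⟨hA, hB, _⟩ := S.pic_props n
  refine Integrable.mono'
    ((S.r_int z hz).const_mul ((Sb I p r z z) ^ n / n.factorial))
    (((hA.mul S.rc).mono Set.inter_subset_left).aestronglyMeasurable (S.measK z))
    (ae_restrict_of_forall_mem (S.measK z) fun ξ hξ => ?_)
  rw [Real.norm_eq_abs, abs_of_nonneg (mul_nonneg (hB ξ hξ.1) (S.rpos ξ hξ.1).le)]
  exact mul_le_mul_of_nonneg_right (S.pic_le n hz ξ hξ) (S.rpos ξ hξ.1).le

lemma SL.picv_cont (S : SL I p r) (n : ℕ) :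
    ContinuousOn (fun y => ∫ ξ in I ∩ Set.Iio y, pic I p r n ξ * r ξ) I :=
  primitive_continuousOn S.opn S.conn ((S.pic_props n).1.mul S.rc)
    (fun z hz => S.picr_int n hz)

lemma SL.picout_int (S : SL I p r) (n : ℕ) {z : ℝ} (hz : z ∈ I) :
    IntegrableOn (fun y => (p y)⁻¹ * ∫ ξ in I ∩ Set.Iio y, pic I p r n ξ * r ξ)
      (I ∩ Set.Iio z) :=
  (S.fubini hz (S.pic_props n).1 (fun ξ hξ => (S.pic_props n).2.1 ξ hξ.1)
    (S.pic_le n hz)).1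

lemma SL.pic_coe (S : SL I p r) (n : ℕ) {z : ℝ} (hz : z ∈ I) :
    ((pic I p r (n + 1) z : ℝ) : ℂ)
      = ∫ y in I ∩ Set.Iio z, ((p y : ℂ))⁻¹
          * ((∫ ξ in I ∩ Set.Iio y, pic I p r n ξ * r ξ : ℝ) : ℂ) := by
  rw [pic]
  beta_reduce
  rw [← integral_coe]
  refine setIntegral_congr_fun (S.measK z) fun y hy => ?_
  push_cast
  ring

/-- The integral equation for `W`. -/
lemma SL.W_eq (S : SL I p r) (lam : ℂ) {x : ℝ} (hx : x ∈ I) :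
    WW I p r lam x = 1 - lam * ∫ y in I ∩ Set.Iio x,
        ((p y : ℂ))⁻¹ * ∫ ξ in I ∩ Set.Iio y, WW I p r lam ξ * (r ξ : ℂ) := by
  set g : ℕ → ℝ → ℂ := fun n y => (-lam) ^ n
    * (((p y : ℂ))⁻¹ * ((∫ ξ in I ∩ Set.Iio y, pic I p r n ξ * r ξ : ℝ) : ℂ)) with hg
  have hcongr : ∀ y ∈ I ∩ Set.Iio x,
      ((p y : ℂ))⁻¹ * (∫ ξ in I ∩ Set.Iio y, WW I p r lam ξ * (r ξ : ℂ)) = ∑' n, g n y := by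
    intro y hy
    rw [S.vW_eq lam hy.1, ← tsum_mul_left]
    exact tsum_congr fun n => by rw [hg]; ring
  have haesm : ∀ n : ℕ, AEStronglyMeasurable (g n)
      (volume.restrict (I ∩ Set.Iio x)) := by
    intro n
    refine ((continuousOn_const.mul
      (((Complex.continuous_ofReal.comp_continuousOn S.pc).inv₀
          (fun y hy => by
            simp only [Function.comp_apply, ne_eq, Complex.ofReal_eq_zero]
            exact (S.ppos y hy).ne')).mul
        (Complex.continuous_ofReal.comp_continuousOn (S.picv_cont n)))).mono
      Set.inter_subset_left).aestronglyMeasurable (S.measK x)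
  have hv_nonneg : ∀ n : ℕ, ∀ y ∈ I,
      0 ≤ ∫ ξ in I ∩ Set.Iio y, pic I p r n ξ * r ξ := by
    intro n y hy
    exact setIntegral_nonneg (S.measK y) fun ξ hξ =>
      mul_nonneg ((S.pic_props n).2.1 ξ hξ.1) (S.rpos ξ hξ.1).le
  have hlint : ∀ n : ℕ, (∫⁻ y in I ∩ Set.Iio x, ‖g n y‖₊)
      = ENNReal.ofReal (‖lam‖ ^ n * pic I p r (n + 1) x) := by
    intro n
    have h1 : ∀ y ∈ I ∩ Set.Iio x, (‖g n y‖₊ : ℝ≥0∞)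
        = ENNReal.ofReal (‖lam‖ ^ n
            * ((p y)⁻¹ * ∫ ξ in I ∩ Set.Iio y, pic I p r n ξ * r ξ)) := by
      intro y hy
      rw [← enorm_eq_nnnorm, ← ofReal_norm]
      congr 1
      rw [hg]
      beta_reduce
      rw [norm_mul, norm_mul, norm_pow, norm_neg, S.norm_pinv hy.1, Complex.norm_real,
        Real.norm_eq_abs, abs_of_nonneg (hv_nonneg n y hy.1)]
    rw [setLIntegral_congr_fun (S.measK x) h1,
      ← ofReal_integral_eq_lintegral_ofReal ((S.picout_int n hx).const_mul (‖lam‖ ^ n))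
        (ae_restrict_of_forall_mem (S.measK x) fun y hy =>
          mul_nonneg (by positivity)
            (mul_nonneg (S.pinv_nonneg hy.1) (hv_nonneg n y hy.1))),
      integral_const_mul]
    congr 1
  set Sxx : ℝ := Sb I p r x x with hSxxdef
  have hSxx0 : 0 ≤ Sxx := S.Sb_nonneg hx hx le_rfl
  have hGsum : Summable (fun n : ℕ => (‖lam‖ * Sxx) ^ n / n.factorial * Sxx) :=
    (Real.summable_pow_div_factorial _).mul_right _
  have hbound : ∀ n : ℕ, ‖lam‖ ^ n * pic I p r (n + 1) x
      ≤ (‖lam‖ * Sxx) ^ n / n.factorial * Sxx := by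
    intro n
    have hfle : (n.factorial : ℝ) ≤ ((n + 1).factorial : ℝ) := by
      exact_mod_cast Nat.factorial_le (Nat.le_succ n)
    have hfpos : (0 : ℝ) < n.factorial := by positivity
    have h2 : pic I p r (n + 1) x ≤ Sxx ^ (n + 1) / (n + 1).factorial :=
      (S.pic_props (n + 1)).2.2 x hx x hx le_rfl
    calc ‖lam‖ ^ n * pic I p r (n + 1) x
        ≤ ‖lam‖ ^ n * (Sxx ^ (n + 1) / (n + 1).factorial) :=
          mul_le_mul_of_nonneg_left h2 (by positivity)
      _ = (‖lam‖ * Sxx) ^ n * Sxx / (n + 1).factorial := by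
          rw [mul_pow, pow_succ]; ring
      _ ≤ (‖lam‖ * Sxx) ^ n * Sxx / n.factorial :=
          div_le_div_of_nonneg_left
            (mul_nonneg (pow_nonneg (mul_nonneg (norm_nonneg _) hSxx0) n) hSxx0)
            hfpos hfle
      _ = (‖lam‖ * Sxx) ^ n / n.factorial * Sxx := by ring
  have hne : (∑' n : ℕ, ∫⁻ y in I ∩ Set.Iio x, ‖g n y‖₊) ≠ ⊤ := by
    rw [tsum_congr hlint]
    have hle : (∑' n : ℕ, ENNReal.ofReal (‖lam‖ ^ n * pic I p r (n + 1) x))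
        ≤ ∑' n : ℕ, ENNReal.ofReal ((‖lam‖ * Sxx) ^ n / n.factorial * Sxx) :=
      ENNReal.tsum_le_tsum fun n => ENNReal.ofReal_le_ofReal (hbound n)
    refine ne_of_lt (lt_of_le_of_lt hle ?_)
    rw [← ENNReal.ofReal_tsum_of_nonneg
      (fun n => by positivity) hGsum]
    exact ENNReal.ofReal_lt_top
  have hout : (∫ y in I ∩ Set.Iio x,
        ((p y : ℂ))⁻¹ * ∫ ξ in I ∩ Set.Iio y, WW I p r lam ξ * (r ξ : ℂ))
      = ∑' n : ℕ, (-lam) ^ n * ((pic I p r (n + 1) x : ℝ) : ℂ) := by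
    rw [setIntegral_congr_fun (S.measK x) hcongr, integral_tsum haesm hne]
    refine tsum_congr fun n => ?_
    rw [hg]
    beta_reduce
    rw [integral_const_mul]
    congr 1
    rw [S.pic_coe n hx]
  rw [hout, WW, Summable.tsum_eq_zero_add (S.W_summable lam hx)]
  have h0 : (-lam) ^ 0 * ((pic I p r 0 x : ℝ) : ℂ) = 1 := by
    simp [pic]
  rw [h0]
  have hshift : ∀ n : ℕ, (-lam) ^ (n + 1) * ((pic I p r (n + 1) x : ℝ) : ℂ)
      = (-lam) * ((-lam) ^ n * ((pic I p r (n + 1) x : ℝ) : ℂ)) := fun n => by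
    rw [pow_succ]; ring
  rw [tsum_congr hshift, tsum_mul_left]
  ring

/-- Uniqueness of continuous solutions of the integral equation. -/
lemma SL.unique (S : SL I p r) (lam : ℂ) (w : ℝ → ℂ)
    (hw_cont : ContinuousOn w I)
    (hw_int1 : ∀ x ∈ I, IntegrableOn (fun ξ => w ξ * (r ξ : ℂ)) (I ∩ Set.Iio x))
    (hw_int2 : ∀ x ∈ I, IntegrableOn
      (fun y => ((p y : ℂ))⁻¹ * ∫ ξ in I ∩ Set.Iio y, w ξ * (r ξ : ℂ)) (I ∩ Set.Iio x))
    (hw_eq : ∀ x ∈ I, w x = 1 - lam * ∫ y in I ∩ Set.Iio x,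
        ((p y : ℂ))⁻¹ * ∫ ξ in I ∩ Set.Iio y, w ξ * (r ξ : ℂ))
    {x : ℝ} (hx : x ∈ I) : w x = WW I p r lam x := by
  set d : ℝ → ℂ := fun ξ => w ξ - WW I p r lam ξ with hd
  have hd_cont : ContinuousOn d I := hw_cont.sub (S.W_contOn lam)
  set J : ℝ := ∫ y in I ∩ Set.Iio x,
      ‖((p y : ℂ))⁻¹ * ∫ ξ in I ∩ Set.Iio y, w ξ * (r ξ : ℂ)‖ with hJ
  have hJ0 : 0 ≤ J := integral_nonneg fun _ => norm_nonneg _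
  set C : ℝ := 1 + ‖lam‖ * J + Real.exp (‖lam‖ * Sb I p r x x) with hC
  have hC0 : 0 ≤ C := by
    have := Real.exp_pos (‖lam‖ * Sb I p r x x)
    have : 0 ≤ ‖lam‖ * J := mul_nonneg (norm_nonneg _) hJ0
    positivity
  have hC_bound : ∀ y ∈ I, y ≤ x → ‖d y‖ ≤ C := by
    intro y hy hyx
    have hw_b : ‖w y‖ ≤ 1 + ‖lam‖ * J := by
      rw [hw_eq y hy]
      refine le_trans (norm_sub_le _ _) ?_
      rw [norm_one, norm_mul]
      refine add_le_add le_rfl (mul_le_mul_of_nonneg_left ?_ (norm_nonneg _))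
      refine le_trans (norm_integral_le_integral_norm _) ?_
      rw [hJ]
      refine setIntegral_mono_set ((hw_int2 x hx).norm)
        (ae_restrict_of_forall_mem (S.measK x) fun _ _ => norm_nonneg _)
        ((S.Ksub hyx).eventuallyLE)
    have hW_b : ‖WW I p r lam y‖ ≤ Real.exp (‖lam‖ * Sb I p r x x) := by
      refine le_trans (S.W_bound lam hx hy hyx) ?_
      exact Real.exp_le_exp.2 (mul_le_mul_of_nonneg_left
        (S.Sb_mono hx hy hx hyx le_rfl) (norm_nonneg _))
    calc ‖d y‖ ≤ ‖w y‖ + ‖WW I p r lam y‖ := norm_sub_le _ _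
      _ ≤ C := by rw [hC]; exact add_le_add hw_b hW_b
  have hd_eq : ∀ y ∈ I, d y = -lam * ∫ η in I ∩ Set.Iio y,
      ((p η : ℂ))⁻¹ * ∫ ξ in I ∩ Set.Iio η, d ξ * (r ξ : ℂ) := by
    intro y hy
    have h3 : (∫ η in I ∩ Set.Iio y,
          ((p η : ℂ))⁻¹ * ∫ ξ in I ∩ Set.Iio η, w ξ * (r ξ : ℂ))
        - (∫ η in I ∩ Set.Iio y,
          ((p η : ℂ))⁻¹ * ∫ ξ in I ∩ Set.Iio η, WW I p r lam ξ * (r ξ : ℂ))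
        = ∫ η in I ∩ Set.Iio y, ((p η : ℂ))⁻¹ * ∫ ξ in I ∩ Set.Iio η, d ξ * (r ξ : ℂ) := by
      rw [← integral_sub (hw_int2 y hy) (S.Wouter_int lam hy)]
      refine setIntegral_congr_fun (S.measK y) fun η hη => ?_
      rw [← mul_sub, ← integral_sub (hw_int1 η hη.1) (S.Wr_int lam hη.1)]
      congr 1
      refine setIntegral_congr_fun (S.measK η) fun ξ _ => ?_
      rw [hd]; ring
    rw [← h3, hd]
    beta_reduce
    rw [hw_eq y hy, S.W_eq lam hy]
    ring
  have hind : ∀ n : ℕ, ∀ y ∈ I, y ≤ x →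
      ‖d y‖ ≤ C * ‖lam‖ ^ n * (Sb I p r x y ^ n / n.factorial) := by
    intro n
    induction n with
    | zero => intro y hy hyx; simpa using hC_bound y hy hyx
    | succ n ih =>
      intro y hy hyx
      have hkey := S.key hx hy hyx hd_cont
        (mul_nonneg hC0 (pow_nonneg (norm_nonneg _) n)) (f := d) (n := n)
        (c := C * ‖lam‖ ^ n)
        (fun ξ hξ => by
          rw [mul_div_assoc]
          exact ih ξ hξ.1 (le_trans hξ.2.le hyx))
      rw [hd_eq y hy, norm_mul, norm_neg]
      calc ‖lam‖ * ‖∫ η in I ∩ Set.Iio y,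
            ((p η : ℂ))⁻¹ * ∫ ξ in I ∩ Set.Iio η, d ξ * (r ξ : ℂ)‖
          ≤ ‖lam‖ * (C * ‖lam‖ ^ n * Sb I p r x y ^ (n + 1) / (n + 1).factorial) :=
            mul_le_mul_of_nonneg_left hkey (norm_nonneg _)
        _ = C * ‖lam‖ ^ (n + 1) * (Sb I p r x y ^ (n + 1) / (n + 1).factorial) := by
            rw [pow_succ]; ring
  have hlim : Filter.Tendsto
      (fun n : ℕ => C * ((‖lam‖ * Sb I p r x x) ^ n / n.factorial)) atTop (𝓝 (C * 0)) :=
    (Real.summable_pow_div_factorial (‖lam‖ * Sb I p r x x)).tendsto_atTop_zero.const_mul C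
  rw [mul_zero] at hlim
  have hdx : ‖d x‖ ≤ 0 := by
    refine ge_of_tendsto hlim (Eventually.of_forall fun n => ?_)
    refine le_trans (hind n x hx le_rfl) (le_of_eq ?_)
    rw [mul_pow]; ring
  have : d x = 0 := norm_le_zero_iff.1 hdx
  rw [hd] at this
  beta_reduce at this
  exact sub_eq_zero.1 this

/-- `λ ↦ W λ x` is entire. -/
lemma SL.W_entire (S : SL I p r) {x : ℝ} (hx : x ∈ I) :
    AnalyticOnNhd ℂ (fun lam => WW I p r lam x) Set.univ := by
  have hSxx0 : 0 ≤ Sb I p r x x := S.Sb_nonneg hx hx le_rfl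
  have hdiff : ∀ R : ℝ, 0 < R →
      DifferentiableOn ℂ (fun lam => WW I p r lam x) (Metric.ball 0 R) := by
    intro R hR
    have htend : TendstoUniformlyOn
        (fun (t : Finset ℕ) (lam : ℂ) => ∑ n ∈ t, (-lam) ^ n * ((pic I p r n x : ℝ) : ℂ))
        (fun lam => WW I p r lam x) atTop (Metric.ball 0 R) := by
      refine tendstoUniformlyOn_tsum
        (Real.summable_pow_div_factorial (R * Sb I p r x x)) (fun n lam hlam => ?_)
      refine le_trans (S.term_bound lam hx hx le_rfl n) ?_
      refine (div_le_div_iff_of_pos_right (by positivity)).2 ?_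
      refine pow_le_pow_left₀ (mul_nonneg (norm_nonneg _) hSxx0) ?_ n
      refine mul_le_mul_of_nonneg_right ?_ hSxx0
      rw [Metric.mem_ball, dist_zero_right] at hlam
      exact hlam.le
    refine (htend.tendstoLocallyUniformlyOn).differentiableOn
      (Eventually.of_forall fun t => ?_) Metric.isOpen_ball
    refine Differentiable.differentiableOn (Differentiable.fun_sum fun n _ => ?_)
    exact ((differentiable_id.neg).pow n).mul_const _
  have hdiffAll : Differentiable ℂ (fun lam => WW I p r lam x) := by
    intro z
    have h := hdiff (‖z‖ + 1) (by positivity)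
    exact h.differentiableAt (Metric.isOpen_ball.mem_nhds (by
      rw [Metric.mem_ball, dist_zero_right]; linarith))
  exact hdiffAll.differentiableOn.analyticOnNhd isOpen_univ

/-- A locally absolutely continuous function is continuous on an open set. -/
lemma locac_continuousOn {f : ℝ → ℝ} {J : Set ℝ} (hf : LocAC f J) (hJ : IsOpen J) :
    ContinuousOn f J := by
  intro x hx
  obtain ⟨ε, hε, hball⟩ := Metric.isOpen_iff.1 hJ x hx
  have hy0 : x - ε / 2 ∈ J := hball (by
    rw [Metric.mem_ball, Real.dist_eq, show x - ε / 2 - x = -(ε / 2) by ring, abs_neg,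
      abs_of_pos (half_pos hε)]; linarith)
  have hy1 : x + ε / 2 ∈ J := hball (by
    rw [Metric.mem_ball, Real.dist_eq, show x + ε / 2 - x = ε / 2 by ring,
      abs_of_pos (half_pos hε)]; linarith)
  have hii : IntervalIntegrable (deriv f) volume (x - ε / 2) (x + ε / 2) :=
    (hf _ hy0 _ hy1).1
  have hco : ContinuousOn (fun b => ∫ t in (x - ε / 2)..b, deriv f t)
      (Set.uIcc (x - ε / 2) (x + ε / 2)) :=
    intervalIntegral.continuousOn_primitive_interval' hii Set.left_mem_uIcc
  have hle : x - ε / 2 ≤ x + ε / 2 := by linarith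
  have hxmem : x ∈ Set.uIcc (x - ε / 2) (x + ε / 2) := by
    rw [Set.uIcc_of_le hle]; constructor <;> linarith
  have hnhds : Set.uIcc (x - ε / 2) (x + ε / 2) ∈ 𝓝 x := by
    rw [Set.uIcc_of_le hle]
    exact Icc_mem_nhds (by linarith) (by linarith)
  have hcAt : ContinuousAt
      (fun b => f (x - ε / 2) + ∫ t in (x - ε / 2)..b, deriv f t) x :=
    continuousAt_const.add ((hco.continuousWithinAt hxmem).continuousAt hnhds)
  refine (hcAt.congr ?_).continuousWithinAt
  filter_upwards [Metric.ball_mem_nhds x (half_pos hε)] with u hu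
  have huJ : u ∈ J := hball (by
    rw [Metric.mem_ball] at hu ⊢; linarith [hu])
  have h2 := (hf _ hy0 u huJ).2
  linarith

end SL0

/-- Existence and uniqueness of the solution `w_λ` of the Sturm–Liouville
boundary value problem `ℓ(w) = λ w`, `w(a) = 1`, `w^{[1]}(a) = 0`, formulated through the
equivalent integral equation
`w_λ(x) = 1 − λ ∫_a^x (1/p(y)) (∫_a^y w_λ(ξ) r(ξ) dξ) dy`;
moreover `λ ↦ w_λ(x)` is entire with the stated exponential bound
`|w_λ(x)| ≤ exp(|λ|·𝒮(x)) ≤ exp(|λ|·𝒮(β))` where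
`𝒮(x) = ∫_a^x (𝔰(β) − 𝔰(ξ)) r(ξ) dξ` and `𝔰(β) − 𝔰(ξ) = ∫_ξ^β dt/p(t)`;
in particular `λ ↦ w_λ(x)` is of exponential type. -/
theorem stmt0
    -- endpoints: −∞ ≤ a < b ≤ ∞
    (a b : EReal) (hab : a < b)
    (I : Set ℝ) (hI : I = {x : ℝ | a < (x : EReal) ∧ (x : EReal) < b})
    -- coefficients
    (p r : ℝ → ℝ)
    (hp : ∀ x ∈ I, 0 < p x) (hr : ∀ x ∈ I, 0 < r x)
    (hpAC : LocAC p I) (hp'AC : LocAC (deriv p) I)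
    (hrAC : LocAC r I) (hr'AC : LocAC (deriv r) I)
    (c : ℝ) (hc : c ∈ I)
    -- left-boundary condition: ∫_a^c ∫_y^c (1/p) dx r(y) dy < ∞
    (hleft : ∫⁻ y in I ∩ Set.Iio c,
        (∫⁻ x in Set.Ioo y c, ENNReal.ofReal (p x)⁻¹) * ENNReal.ofReal (r y) < ⊤) :
    ∃ W : ℂ → ℝ → ℂ,
      -- W λ is, for each λ, a continuous solution of the integral equation
      (∀ lam : ℂ,
        ContinuousOn (W lam) I ∧
        (∀ x ∈ I, IntegrableOn (fun ξ => W lam ξ * (r ξ : ℂ)) (I ∩ Set.Iio x)) ∧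
        (∀ x ∈ I, IntegrableOn
          (fun y => ((p y : ℂ))⁻¹ * ∫ ξ in I ∩ Set.Iio y, W lam ξ * (r ξ : ℂ))
          (I ∩ Set.Iio x)) ∧
        (∀ x ∈ I, W lam x
          = 1 - lam * ∫ y in I ∩ Set.Iio x,
              ((p y : ℂ))⁻¹ * ∫ ξ in I ∩ Set.Iio y, W lam ξ * (r ξ : ℂ))) ∧
      -- uniqueness: any continuous solution of the integral equation coincides with W λ on I
      (∀ lam : ℂ, ∀ w : ℝ → ℂ,
        (ContinuousOn w I ∧
          (∀ x ∈ I, IntegrableOn (fun ξ => w ξ * (r ξ : ℂ)) (I ∩ Set.Iio x)) ∧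
          (∀ x ∈ I, IntegrableOn
            (fun y => ((p y : ℂ))⁻¹ * ∫ ξ in I ∩ Set.Iio y, w ξ * (r ξ : ℂ))
            (I ∩ Set.Iio x)) ∧
          (∀ x ∈ I, w x
            = 1 - lam * ∫ y in I ∩ Set.Iio x,
                ((p y : ℂ))⁻¹ * ∫ ξ in I ∩ Set.Iio y, w ξ * (r ξ : ℂ))) →
        ∀ x ∈ I, w x = W lam x) ∧
      -- λ ↦ W λ x is entire
      (∀ x ∈ I, AnalyticOnNhd ℂ (fun lam => W lam x) Set.univ) ∧
      -- exponential bound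
      (∀ lam : ℂ, ∀ x ∈ I, ∀ β ∈ I, x ≤ β →
        ‖W lam x‖ ≤
          Real.exp (‖lam‖ * ∫ ξ in I ∩ Set.Iio x, (∫ t in ξ..β, (p t)⁻¹) * r ξ) ∧
        Real.exp (‖lam‖ * ∫ ξ in I ∩ Set.Iio x, (∫ t in ξ..β, (p t)⁻¹) * r ξ) ≤
          Real.exp (‖lam‖ * ∫ ξ in I ∩ Set.Iio β, (∫ t in ξ..β, (p t)⁻¹) * r ξ)) ∧
      -- in particular, λ ↦ W λ x is of exponential type
      (∀ x ∈ I, ∃ C τ : ℝ, ∀ lam : ℂ, ‖W lam x‖ ≤ C * Real.exp (τ * ‖lam‖)) := by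
  have hIopen : IsOpen I := by
    rw [hI]
    exact IsOpen.preimage continuous_coe_real_ereal isOpen_Ioo
  have hmemI : ∀ x : ℝ, x ∈ I ↔ a < (x : EReal) ∧ (x : EReal) < b := by
    intro x; rw [hI]; rfl
  have hIconn : Set.OrdConnected I := by
    constructor
    intro x hx y hy z hz
    rw [hmemI] at hx hy ⊢
    exact ⟨lt_of_lt_of_le hx.1 (EReal.coe_le_coe_iff.2 hz.1),
      lt_of_le_of_lt (EReal.coe_le_coe_iff.2 hz.2) hy.2⟩
  have hpc : ContinuousOn p I := SL0.locac_continuousOn hpAC hIopen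
  have hrc : ContinuousOn r I := SL0.locac_continuousOn hrAC hIopen
  have hpinv : ContinuousOn (fun y => (p y)⁻¹) I := hpc.inv₀ fun x hx => (hp x hx).ne'
  have hImeas : MeasurableSet I := hIopen.measurableSet
  have hKmeas : MeasurableSet (I ∩ Set.Iio c) := hImeas.inter measurableSet_Iio
  have hqc_cont : ContinuousOn (fun y => ∫ t in y..c, (p t)⁻¹) I := by
    intro y hy
    have hd : HasDerivAt (fun u => ∫ t in c..u, (p t)⁻¹) ((p y)⁻¹) y :=
      intervalIntegral.integral_hasDerivAt_right
        ((hpinv.mono (hIconn.uIcc_subset hc hy)).intervalIntegrable)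
        ⟨I, hIopen.mem_nhds hy, hpinv.aestronglyMeasurable hImeas⟩
        (hpinv.continuousAt (hIopen.mem_nhds hy))
    have heq : (fun u => ∫ t in u..c, (p t)⁻¹) = fun u => -(∫ t in c..u, (p t)⁻¹) :=
      funext fun u => intervalIntegral.integral_symm c u
    rw [heq]
    exact (hd.continuousAt.neg).continuousWithinAt
  have hq_nonneg : ∀ y ∈ I ∩ Set.Iio c, 0 ≤ ∫ t in y..c, (p t)⁻¹ := by
    intro y hy
    refine intervalIntegral.integral_nonneg hy.2.le fun u hu => ?_
    exact inv_nonneg.2 (hp u (hIconn.uIcc_subset hy.1 hc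
      (by rw [Set.uIcc_of_le hy.2.le]; exact hu))).le
  have hbase : IntegrableOn (fun y => (∫ t in y..c, (p t)⁻¹) * r y) (I ∩ Set.Iio c) := by
    have hnn : ∀ y ∈ I ∩ Set.Iio c, 0 ≤ (∫ t in y..c, (p t)⁻¹) * r y := fun y hy =>
      mul_nonneg (hq_nonneg y hy) (hr y hy.1).le
    refine ⟨((hqc_cont.mul hrc).mono Set.inter_subset_left).aestronglyMeasurable hKmeas, ?_⟩
    rw [MeasureTheory.hasFiniteIntegral_iff_ofReal
      (MeasureTheory.ae_restrict_of_forall_mem hKmeas hnn)]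
    have hcongr : ∀ y ∈ I ∩ Set.Iio c,
        ENNReal.ofReal ((∫ t in y..c, (p t)⁻¹) * r y)
          = (∫⁻ x in Set.Ioo y c, ENNReal.ofReal (p x)⁻¹) * ENNReal.ofReal (r y) := by
      intro y hy
      have hIccI : Set.Icc y c ⊆ I := hIconn.out hy.1 hc
      have hpii : IntegrableOn (fun t => (p t)⁻¹) (Set.Ioo y c) :=
        ((hpinv.mono hIccI).integrableOn_Icc).mono_set Set.Ioo_subset_Icc_self
      have h1 : ENNReal.ofReal (∫ t in y..c, (p t)⁻¹)
          = ∫⁻ x in Set.Ioo y c, ENNReal.ofReal (p x)⁻¹ := by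
        rw [intervalIntegral.integral_of_le hy.2.le,
          MeasureTheory.integral_Ioc_eq_integral_Ioo]
        exact MeasureTheory.ofReal_integral_eq_lintegral_ofReal hpii
          (MeasureTheory.ae_restrict_of_forall_mem measurableSet_Ioo fun u hu =>
            inv_nonneg.2 (hp u (hIccI (Set.Ioo_subset_Icc_self hu))).le)
      rw [ENNReal.ofReal_mul (hq_nonneg y hy), h1]
    rw [MeasureTheory.setLIntegral_congr_fun hKmeas hcongr]
    exact hleft
  have hexh : ∀ x ∈ I, ∃ t : ℕ → ℝ, Antitone t ∧ (∀ k, t k ∈ I ∩ Set.Iio x) ∧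
      ∀ y ∈ I ∩ Set.Iio x, ∃ k, t k < y := by
    intro x hx
    have hax : a < (x : EReal) := ((hmemI x).1 hx).1
    obtain ⟨u, hu_anti, hu_mem, hu_tend⟩ := exists_seq_strictAnti_tendsto' hax
    have hne : ∀ k, u k ≠ ⊥ ∧ u k ≠ ⊤ := fun k =>
      ⟨ne_bot_of_gt (hu_mem k).1, ne_top_of_lt (hu_mem k).2⟩
    have hcoe : ∀ k, ((u k).toReal : EReal) = u k := fun k =>
      EReal.coe_toReal (hne k).2 (hne k).1
    refine ⟨fun k => (u k).toReal, ?_, ?_, ?_⟩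
    · intro i j hij
      exact EReal.toReal_le_toReal (hu_anti.antitone hij) (hne j).1 (hne i).2
    · intro k
      constructor
      · rw [hmemI]
        refine ⟨by rw [hcoe k]; exact (hu_mem k).1, ?_⟩
        rw [hcoe k]
        exact lt_trans (hu_mem k).2 ((hmemI x).1 hx).2
      · show (u k).toReal < x
        rw [← EReal.coe_lt_coe_iff, hcoe k]
        exact (hu_mem k).2
    · intro y hy
      have hay : a < (y : EReal) := ((hmemI y).1 hy.1).1
      have hev : ∀ᶠ k in Filter.atTop, u k ∈ Set.Iio (y : EReal) :=
        hu_tend.eventually_mem (Iio_mem_nhds hay)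
      obtain ⟨k, hk⟩ := hev.exists
      refine ⟨k, ?_⟩
      rw [← EReal.coe_lt_coe_iff, hcoe k]
      exact hk
  have S : SL0.SL I p r := ⟨hIopen, hIconn, hpc, hrc, hp, hr, ⟨c, hc, hbase⟩, hexh⟩
  refine ⟨SL0.WW I p r, ?_, ?_, ?_, ?_, ?_⟩
  · intro lam
    exact ⟨S.W_contOn lam, fun x hx => S.Wr_int lam hx, fun x hx => S.Wouter_int lam hx,
      fun x hx => S.W_eq lam hx⟩
  · rintro lam w ⟨h1, h2, h3, h4⟩ x hx
    exact S.unique lam w h1 h2 h3 h4 hx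
  · intro x hx
    exact S.W_entire hx
  · intro lam x hx β hβ hxβ
    exact ⟨S.W_bound lam hβ hx hxβ, Real.exp_le_exp.2 (mul_le_mul_of_nonneg_left
      (S.Sb_mono hβ hx hβ hxβ le_rfl) (norm_nonneg _))⟩
  · intro x hx
    refine ⟨1, SL0.Sb I p r x x, fun lam => ?_⟩
    rw [one_mul, mul_comm]
    exact S.W_bound lam hx hx le_rfl
end

section
/- For every λ ∈ ℂ and every x ∈ (a,b), w_{λ,m}(x) → w_λ(x) as m → ∞ (the convergence being pointwise, for m large enough that a_m < x). -/
open MeasureTheory Filter Topology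
open scoped ENNReal

private lemma measurable_indicator_of_continuousOn {γ : Type*} [TopologicalSpace γ]
    [MeasurableSpace γ] [BorelSpace γ] [Zero γ]
    {f : ℝ → γ} {U : Set ℝ} (hU : IsOpen U) (hf : ContinuousOn f U) :
    Measurable (U.indicator f) := by
  apply measurable_of_isOpen
  intro s hs
  by_cases h0 : (0 : γ) ∈ s
  · have : U.indicator f ⁻¹' s = (U ∩ f ⁻¹' s) ∪ Uᶜ := by
      ext x; by_cases hx : x ∈ U <;> simp [Set.indicator, hx, h0]
    rw [this]
    exact ((hf.isOpen_inter_preimage hU hs).measurableSet).union hU.measurableSet.compl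
  · have : U.indicator f ⁻¹' s = U ∩ f ⁻¹' s := by
      ext x; by_cases hx : x ∈ U <;> simp [Set.indicator, hx, h0]
    rw [this]
    exact (hf.isOpen_inter_preimage hU hs).measurableSet

private lemma lint_swap {U : Set ℝ} (hU : MeasurableSet U)
    {f g : ℝ → ℝ≥0∞} (hf : AEMeasurable f (volume.restrict U))
    (hg : AEMeasurable g (volume.restrict U)) :
    ∫⁻ y in U, f y * ∫⁻ ξ in U ∩ Set.Iio y, g ξ
      = ∫⁻ ξ in U, g ξ * ∫⁻ y in U ∩ Set.Ioi ξ, f y := by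
  set μU := volume.restrict U with hμU
  set Φ : ℝ × ℝ → ℝ≥0∞ :=
    fun q => {q : ℝ × ℝ | q.2 < q.1}.indicator (fun q => f q.1 * g q.2) q with hΦ
  have hΦm : AEMeasurable Φ (μU.prod μU) := by
    refine AEMeasurable.indicator ?_ (measurableSet_lt measurable_snd measurable_fst)
    exact hf.comp_fst.mul hg.comp_snd
  have hL : ∀ y : ℝ, f y * ∫⁻ ξ in U ∩ Set.Iio y, g ξ = ∫⁻ ξ, Φ (y, ξ) ∂μU := by
    intro y
    have h1 : ∫⁻ ξ in U ∩ Set.Iio y, g ξ = ∫⁻ ξ, (Set.Iio y).indicator g ξ ∂μU := by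
      rw [lintegral_indicator measurableSet_Iio, hμU,
        Measure.restrict_restrict measurableSet_Iio, Set.inter_comm]
    rw [h1, ← lintegral_const_mul'' (f y) (hg.indicator measurableSet_Iio)]
    refine lintegral_congr fun ξ => ?_
    by_cases h : ξ < y <;> simp [hΦ, Set.indicator, h]
  have hR : ∀ ξ : ℝ, g ξ * ∫⁻ y in U ∩ Set.Ioi ξ, f y = ∫⁻ y, Φ (y, ξ) ∂μU := by
    intro ξ
    have h1 : ∫⁻ y in U ∩ Set.Ioi ξ, f y = ∫⁻ y, (Set.Ioi ξ).indicator f y ∂μU := by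
      rw [lintegral_indicator measurableSet_Ioi, hμU,
        Measure.restrict_restrict measurableSet_Ioi, Set.inter_comm]
    rw [h1, ← lintegral_const_mul'' (g ξ) (hf.indicator measurableSet_Ioi)]
    refine lintegral_congr fun y => ?_
    by_cases h : ξ < y <;> simp [hΦ, Set.indicator, h, mul_comm]
  calc ∫⁻ y in U, f y * ∫⁻ ξ in U ∩ Set.Iio y, g ξ
      = ∫⁻ y, ∫⁻ ξ, Φ (y, ξ) ∂μU ∂μU := lintegral_congr hL
    _ = ∫⁻ ξ, ∫⁻ y, Φ (y, ξ) ∂μU ∂μU := lintegral_lintegral_swap hΦm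
    _ = ∫⁻ ξ in U, g ξ * ∫⁻ y in U ∩ Set.Ioi ξ, f y := (lintegral_congr hR).symm

private lemma tail_tendsto {U : Set ℝ} (hU : MeasurableSet U) {f : ℝ → ℝ≥0∞}
    (hfin : ∫⁻ x in U, f x ≠ ⊤)
    {A : ℕ → ℝ} (hanti : Antitone A) (hmem : ∀ x ∈ U, ∃ m, A m < x) :
    Tendsto (fun m => ∫⁻ x in U ∩ Set.Iio (A m), f x) atTop (𝓝 0) := by
  set ρ := (volume.restrict U).withDensity f with hρdef
  have hρ : ∀ s : Set ℝ, MeasurableSet s → ρ s = ∫⁻ x in U ∩ s, f x := by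
    intro s hs
    rw [hρdef, withDensity_apply f hs, Measure.restrict_restrict hs, Set.inter_comm]
  haveI : IsFiniteMeasure ρ := by
    constructor
    rw [hρ Set.univ MeasurableSet.univ, Set.inter_univ]
    exact hfin.lt_top
  have h1 : Tendsto (fun m => ρ (Set.Iio (A m))) atTop (𝓝 (ρ (⋂ m, Set.Iio (A m)))) := by
    refine tendsto_measure_iInter_atTop
      (fun m => measurableSet_Iio.nullMeasurableSet)
      (fun i j hij => Set.Iio_subset_Iio (hanti hij)) ⟨0, measure_ne_top _ _⟩
  have h2 : ρ (⋂ m, Set.Iio (A m)) = 0 := by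
    rw [hρ _ (MeasurableSet.iInter fun m => measurableSet_Iio)]
    have : U ∩ ⋂ m, Set.Iio (A m) = ∅ := by
      ext x
      simp only [Set.mem_inter_iff, Set.mem_iInter, Set.mem_Iio, Set.mem_empty_iff_false,
        iff_false, not_and, not_forall]
      intro hx
      obtain ⟨m, hm⟩ := hmem x hx
      exact ⟨m, not_lt.2 hm.le⟩
    rw [this, Measure.restrict_empty, lintegral_zero_measure]
  rw [h2] at h1
  refine h1.congr fun m => hρ _ measurableSet_Iio

private lemma lint_union_le (μ : Measure ℝ) (h : ℝ → ℝ≥0∞) (s : ℕ → Set ℝ) (n : ℕ) :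
    ∫⁻ x in ⋃ j ∈ Finset.range n, s j, h x ∂μ ≤ ∑ j ∈ Finset.range n, ∫⁻ x in s j, h x ∂μ := by
  induction n with
  | zero => simp
  | succ n ih =>
    rw [Finset.sum_range_succ]
    have hst : (⋃ j ∈ Finset.range (n + 1), s j) = (⋃ j ∈ Finset.range n, s j) ∪ s n := by
      ext x
      simp only [Set.mem_iUnion, Finset.mem_range, Set.mem_union]
      constructor
      · rintro ⟨j, hj, hx⟩
        rcases Nat.lt_succ_iff_lt_or_eq.1 hj with h' | rfl
        · exact Or.inl ⟨j, h', hx⟩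
        · exact Or.inr hx
      · rintro (⟨j, hj, hx⟩ | hx)
        · exact ⟨j, Nat.lt_succ_of_lt hj, hx⟩
        · exact ⟨n, Nat.lt_succ_self n, hx⟩
    rw [hst]
    refine le_trans (le_trans (lintegral_mono' (Measure.restrict_union_le _ _) le_rfl) ?_)
      (add_le_add ih le_rfl)
    rw [lintegral_add_measure]

private lemma gronwall_num {e : ℝ} (he : 0 ≤ e) {s : ℕ → ℝ} {N : ℕ}
    (h : ∀ i ≤ N, s i ≤ e + (1 / 2) * ∑ j ∈ Finset.range (i + 1), s j) :
    ∀ i ≤ N, s i ≤ 2 ^ (i + 1) * e := by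
  intro i
  induction i using Nat.strong_induction_on with
  | _ i ih =>
    intro hiN
    have hsum : ∑ j ∈ Finset.range i, s j ≤ ∑ j ∈ Finset.range i, 2 ^ (j + 1) * e :=
      Finset.sum_le_sum fun j hj =>
        ih j (Finset.mem_range.1 hj) (le_trans (le_of_lt (Finset.mem_range.1 hj)) hiN)
  -- geometric sum
    have hgeo : ∑ j ∈ Finset.range i, (2 : ℝ) ^ (j + 1) = 2 ^ (i + 1) - 2 := by
      have : ∑ j ∈ Finset.range i, (2 : ℝ) ^ (j + 1) =
          (∑ j ∈ Finset.range i, (2 : ℝ) ^ j) * 2 := by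
        rw [Finset.sum_mul]
        exact Finset.sum_congr rfl fun j _ => by ring
      rw [this, geom_sum_eq (by norm_num : (2:ℝ) ≠ 1)]
      field_simp
      ring
    have hsum2 : ∑ j ∈ Finset.range i, 2 ^ (j + 1) * e = (2 ^ (i + 1) - 2) * e := by
      rw [← Finset.sum_mul, hgeo]
    have h1 := h i hiN
    rw [Finset.sum_range_succ] at h1
    nlinarith [hsum, hsum2, h1]

private lemma partition_base {ν : Measure ℝ} {u v : ℝ} (huv : u ≤ v)
    (h : (ν (Set.Ioo u v)).toReal ≤ 1 / 2) :
    ∃ N : ℕ, ∃ cc : ℕ → ℝ, Monotone cc ∧ cc 0 = u ∧ (∀ i, N ≤ i → cc i = v) ∧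
      ∀ i, (ν (Set.Ioo (cc i) (cc (i + 1)))).toReal ≤ 1 / 2 := by
  refine ⟨1, fun i => if i = 0 then u else v, ?_, by simp, ?_, ?_⟩
  · intro i j hij
    by_cases hi : i = 0 <;> by_cases hj : j = 0 <;> simp [hi, hj, huv]
    omega
  · intro i hi
    have : i ≠ 0 := by omega
    simp [this]
  · intro i
    by_cases hi : i = 0
    · simpa [hi] using h
    · have : i + 1 ≠ 0 := by omega
      simp [hi, this, Set.Ioo_self]

private lemma exists_partition (ν : Measure ℝ) [IsFiniteMeasure ν] :
    ∀ n : ℕ, ∀ u v : ℝ, u ≤ v → (ν (Set.Ioo u v)).toReal ≤ (n : ℝ) / 2 →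
      ∃ N : ℕ, ∃ cc : ℕ → ℝ, Monotone cc ∧ cc 0 = u ∧ (∀ i, N ≤ i → cc i = v) ∧
        ∀ i, (ν (Set.Ioo (cc i) (cc (i + 1)))).toReal ≤ 1 / 2 := by
  intro n
  induction n with
  | zero =>
    intro u v huv hb
    exact partition_base huv (le_trans hb (by norm_num))
  | succ n ih =>
    intro u v huv hb
    by_cases hle : (ν (Set.Ioo u v)).toReal ≤ 1 / 2
    · exact partition_base huv hle
    · push_neg at hle
      set T : Set ℝ := {t | t ∈ Set.Icc u v ∧ (ν (Set.Ioo u t)).toReal ≤ 1 / 2} with hT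
      have hTu : u ∈ T := ⟨⟨le_refl u, huv⟩, by simp [Set.Ioo_self]⟩
      have hTne : T.Nonempty := ⟨u, hTu⟩
      have hTbdd : BddAbove T := ⟨v, fun t ht => ht.1.2⟩
      set s := sSup T with hs
      have hus : u ≤ s := le_csSup hTbdd hTu
      have hsv : s ≤ v := csSup_le hTne fun t ht => ht.1.2
      have claim1 : (ν (Set.Ioo u s)).toReal ≤ 1 / 2 := by
        rcases eq_or_lt_of_le hus with heq | hlt
        · simp [← heq, Set.Ioo_self]
        · have hch : ∀ n : ℕ, ∃ t, t ∈ T ∧ s - 1 / (n + 1) < t := by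
            intro n
            obtain ⟨t, ht, hlt'⟩ := exists_lt_of_lt_csSup hTne
              (show s - 1 / (n + 1) < s by
                have : (0:ℝ) < 1 / (n + 1) := by positivity
                linarith)
            exact ⟨t, ht, hlt'⟩
          choose t htT htlt using hch
          -- monotone envelope
          let t' : ℕ → ℝ := fun n => Nat.rec (t 0) (fun n tn => max tn (t (n + 1))) n
          have ht'T : ∀ n, t' n ∈ T := by
            intro n
            induction n with
            | zero => exact htT 0
            | succ n ihn =>
              rcases max_choice (t' n) (t (n + 1)) with h | h
              · show max (t' n) (t (n+1)) ∈ T; rw [h]; exact ihn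
              · show max (t' n) (t (n+1)) ∈ T; rw [h]; exact htT (n + 1)
          have ht'mono : Monotone t' := monotone_nat_of_le_succ fun n => le_max_left _ _
          have ht'ge : ∀ n, t n ≤ t' n := by
            intro n
            cases n with
            | zero => exact le_refl _
            | succ n => exact le_max_right _ _
          have hcover : Set.Ioo u s ⊆ ⋃ n, Set.Ioo u (t' n) := by
            intro x hx
            obtain ⟨n, hn⟩ := exists_nat_one_div_lt (show (0:ℝ) < s - x by linarith [hx.2])
            refine Set.mem_iUnion.2 ⟨n, hx.1, ?_⟩
            have : s - 1 / (n + 1) < t n := htlt n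
            have := ht'ge n
            linarith
          have hdir : Directed (· ⊆ ·) fun n => Set.Ioo u (t' n) := fun i j =>
            ⟨max i j, Set.Ioo_subset_Ioo_right (ht'mono (le_max_left i j)),
              Set.Ioo_subset_Ioo_right (ht'mono (le_max_right i j))⟩
          have hsup : ν (⋃ n, Set.Ioo u (t' n)) = ⨆ n, ν (Set.Ioo u (t' n)) :=
            hdir.measure_iUnion
          have : ν (Set.Ioo u s) ≤ ENNReal.ofReal (1 / 2) := by
            refine le_trans (measure_mono hcover) ?_
            rw [hsup]
            refine iSup_le fun n => ?_
            exact (ENNReal.le_ofReal_iff_toReal_le (measure_ne_top ν _) (by norm_num)).2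
              (ht'T n).2
          exact ENNReal.toReal_le_of_le_ofReal (by norm_num) this
      have hsvlt : s < v := by
        rcases eq_or_lt_of_le hsv with heq | hlt
        · exfalso; rw [heq] at claim1; linarith
        · exact hlt
      have claim3 : 1 / 2 ≤ (ν (Set.Ioc u s)).toReal := by
        set sn : ℕ → ℝ := fun n => s + (v - s) / (n + 1) with hsn
        have hsngt : ∀ n, s < sn n := by
          intro n; have : (0:ℝ) < (v - s) / (n + 1) := div_pos (by linarith) (by positivity)
          simp only [hsn]; linarith
        have hsnle : ∀ n, sn n ≤ v := by
          intro n
          have h1 : (v - s) / ((n:ℝ) + 1) ≤ v - s :=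
            div_le_self (by linarith) (le_add_of_nonneg_left (Nat.cast_nonneg n))
          simp only [hsn]; linarith
        have hbig : ∀ n, 1 / 2 < (ν (Set.Ioo u (sn n))).toReal := by
          intro n
          by_contra hcon
          push_neg at hcon
          have : sn n ∈ T := ⟨⟨by linarith [hsngt n, hus], hsnle n⟩, hcon⟩
          exact absurd (le_csSup hTbdd this) (not_le.2 (hsngt n))
        have hiInter : ⋂ n, Set.Ioo u (sn n) = Set.Ioc u s := by
          ext x
          simp only [Set.mem_iInter, Set.mem_Ioo, Set.mem_Ioc]
          constructor
          · intro hx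
            refine ⟨(hx 0).1, ?_⟩
            by_contra hxs
            push_neg at hxs
            obtain ⟨n, hn⟩ := exists_nat_one_div_lt
              (show (0:ℝ) < (x - s) / (v - s) by
                apply div_pos (by linarith) (by linarith))
            have h2 : (v - s) / ((n:ℝ) + 1) < x - s := by
              have hvs : (0:ℝ) < v - s := by linarith
              calc (v - s) / ((n:ℝ) + 1) = (v - s) * (1 / (n + 1)) := by ring
                _ < (v - s) * ((x - s) / (v - s)) := by
                    exact mul_lt_mul_of_pos_left hn hvs
                _ = x - s := by field_simp
            have := (hx n).2
            simp only [hsn] at this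
            linarith
          · intro hx n
            exact ⟨hx.1, lt_of_le_of_lt hx.2 (hsngt n)⟩
        have hanti : Antitone fun n => Set.Ioo u (sn n) := by
          intro i j hij
          apply Set.Ioo_subset_Ioo_right
          simp only [hsn]
          have : (v - s) / ((j:ℝ) + 1) ≤ (v - s) / ((i:ℝ) + 1) := by
            have h1 : 1 / ((j:ℝ) + 1) ≤ 1 / ((i:ℝ) + 1) :=
              one_div_le_one_div_of_le (by positivity) (by exact_mod_cast by omega)
            have h2 : (0:ℝ) ≤ v - s := by linarith
            calc (v - s) / ((j:ℝ) + 1) = (v - s) * (1 / ((j:ℝ) + 1)) := by ring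
              _ ≤ (v - s) * (1 / ((i:ℝ) + 1)) := mul_le_mul_of_nonneg_left h1 h2
              _ = (v - s) / ((i:ℝ) + 1) := by ring
          linarith
        have htends : Tendsto (fun n => ν (Set.Ioo u (sn n))) atTop (𝓝 (ν (Set.Ioc u s))) := by
          have := tendsto_measure_iInter_atTop (μ := ν)
            (fun n => measurableSet_Ioo.nullMeasurableSet) hanti ⟨0, measure_ne_top _ _⟩
          rwa [hiInter] at this
        have htendsR : Tendsto (fun n => (ν (Set.Ioo u (sn n))).toReal) atTop
            (𝓝 ((ν (Set.Ioc u s)).toReal)) :=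
          (ENNReal.tendsto_toReal (measure_ne_top _ _)).comp htends
        exact ge_of_tendsto' htendsR fun n => (hbig n).le
      have hsplit : ν (Set.Ioo u v) = ν (Set.Ioc u s) + ν (Set.Ioo s v) := by
        rw [← measure_union ?hd measurableSet_Ioo]
        · congr 1
          ext x
          simp only [Set.mem_union, Set.mem_Ioo, Set.mem_Ioc]
          constructor
          · rintro ⟨h1, h2⟩
            rcases le_or_gt x s with h | h
            · exact Or.inl ⟨h1, h⟩
            · exact Or.inr ⟨h, h2⟩
          · rintro (⟨h1, h2⟩ | ⟨h1, h2⟩)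
            · exact ⟨h1, lt_of_le_of_lt h2 hsvlt⟩
            · exact ⟨lt_of_le_of_lt hus h1, h2⟩
        · exact Set.disjoint_left.2 fun x h1 h2 => absurd h2.1 (not_lt.2 h1.2)
      have hrec : (ν (Set.Ioo s v)).toReal ≤ (n : ℝ) / 2 := by
        have h1 : (ν (Set.Ioo u v)).toReal
            = (ν (Set.Ioc u s)).toReal + (ν (Set.Ioo s v)).toReal := by
          rw [hsplit, ENNReal.toReal_add (measure_ne_top _ _) (measure_ne_top _ _)]
        push_cast at hb ⊢
        linarith
      obtain ⟨N', cc', hmono', h0', hN', hcell'⟩ := ih s v hsvlt.le hrec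
      refine ⟨N' + 1, fun i => Nat.casesOn i u cc', ?_, rfl, ?_, ?_⟩
      · apply monotone_nat_of_le_succ
        intro i
        cases i with
        | zero => show u ≤ cc' 0; rw [h0']; exact hus
        | succ i => exact hmono' (Nat.le_succ i)
      · intro i hi
        cases i with
        | zero => omega
        | succ i => exact hN' i (by omega)
      · intro i
        cases i with
        | zero => show (ν (Set.Ioo u (cc' 0))).toReal ≤ 1 / 2; rw [h0']; exact claim1
        | succ i => exact hcell' i

private lemma cont_primitive {f : ℝ → ℂ} {α β : ℝ}
    (h : IntegrableOn f (Set.Icc α β)) :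
    ContinuousOn (fun t => ∫ ξ in Set.Ioo α t, f ξ) (Set.Icc α β) := by
  have h1 := intervalIntegral.continuousOn_primitive (f := f) (μ := volume) (a := α) (b := β) h
  refine h1.congr fun t _ => ?_
  exact integral_Ioc_eq_integral_Ioo.symm

private lemma locAC_continuousOn {f : ℝ → ℝ} {U : Set ℝ} (hU : IsOpen U)
    (h : ∀ x ∈ U, ∀ y ∈ U, IntervalIntegrable (deriv f) MeasureTheory.volume x y ∧
      f y - f x = ∫ t in x..y, deriv f t) : ContinuousOn f U := by
  intro x hx
  obtain ⟨ε, hε, hball⟩ := Metric.isOpen_iff.1 hU x hx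
  have hmem : ∀ t : ℝ, |t - x| ≤ ε / 2 → t ∈ U := by
    intro t ht
    apply hball
    rw [Metric.mem_ball, Real.dist_eq]
    linarith [abs_nonneg (t - x)]
  set u := x - ε / 2 with hu
  set v := x + ε / 2 with hv
  have huU : u ∈ U := hmem u (by
    have h1 : u - x = -(ε / 2) := by rw [hu]; ring
    rw [h1, abs_neg, abs_of_nonneg (by linarith)])
  have hvU : v ∈ U := hmem v (by
    have h1 : v - x = ε / 2 := by rw [hv]; ring
    rw [h1, abs_of_nonneg (by linarith)])
  have hIccU : Set.Icc u v ⊆ U := by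
    intro t ht
    obtain ⟨ht1, ht2⟩ := ht
    apply hmem
    rw [abs_le]
    rw [hu] at ht1; rw [hv] at ht2
    constructor <;> linarith
  have hint : IntegrableOn (deriv f) (Set.Icc u v) := by
    have h2 := (h u huU v hvU).1
    rw [intervalIntegrable_iff_integrableOn_Icc_of_le (by rw [hu, hv]; linarith)] at h2
    exact h2
  have hprim : ContinuousOn (fun t => ∫ s in Set.Ioc u t, deriv f s) (Set.Icc u v) :=
    intervalIntegral.continuousOn_primitive hint
  have hfeq : ∀ t ∈ Set.Icc u v, f t = f u + ∫ s in Set.Ioc u t, deriv f s := by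
    intro t ht
    have h2 := (h u huU t (hIccU ht)).2
    rw [intervalIntegral.integral_of_le ht.1] at h2
    linarith
  have hcont : ContinuousOn f (Set.Icc u v) := by
    have hc2 : ContinuousOn (fun t => f u + ∫ s in Set.Ioc u t, deriv f s) (Set.Icc u v) :=
      continuousOn_const.add hprim
    exact hc2.congr hfeq
  have hx_mem : Set.Icc u v ∈ 𝓝 x := by
    apply Icc_mem_nhds <;> [rw [hu]; rw [hv]] <;> linarith
  exact (hcont.continuousAt hx_mem).continuousWithinAt

private lemma ofReal_norm_integral_le (f : ℝ → ℂ) (μ : Measure ℝ) :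
    ENNReal.ofReal ‖∫ y, f y ∂μ‖ ≤ ∫⁻ y, ENNReal.ofReal ‖f y‖ ∂μ := by
  rw [ofReal_norm]
  refine le_trans (enorm_integral_le_lintegral_enorm _) (le_of_eq ?_)
  exact lintegral_congr fun ξ => (ofReal_norm _).symm


private lemma locAC_continuousOn' {f : ℝ → ℝ} {U : Set ℝ} (hU : IsOpen U)
    (h : LocAC f U) : ContinuousOn f U :=
  locAC_continuousOn hU h

/-- If `w_{λ,m}` is the solution of the Sturm–Liouville boundary value problem
with initial point `a_m` (i.e. `ℓ(w) = λ w` on `(a_m, b)`, `w(a_m) = 1`, `w^{[1]}(a_m) = 0`,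
formulated via the equivalent integral equation), and `a_m ↓ a`, then for every `λ ∈ ℂ` and
every `x ∈ (a,b)` one has `w_{λ,m}(x) → w_λ(x)` as `m → ∞`. -/
theorem stmt1
    (a b : EReal) (hab : a < b)
    (I : Set ℝ) (hI : I = {x : ℝ | a < (x : EReal) ∧ (x : EReal) < b})
    (p r : ℝ → ℝ)
    (hp : ∀ x ∈ I, 0 < p x) (hr : ∀ x ∈ I, 0 < r x)
    (hpAC : LocAC p I) (hp'AC : LocAC (deriv p) I)
    (hrAC : LocAC r I) (hr'AC : LocAC (deriv r) I)
    (c : ℝ) (hc : c ∈ I)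
    (hleft : ∫⁻ y in I ∩ Set.Iio c,
        (∫⁻ x in Set.Ioo y c, ENNReal.ofReal (p x)⁻¹) * ENNReal.ofReal (r y) < ⊤)
    -- the solution w_λ on (a,b), characterized by the integral equation
    (w : ℂ → ℝ → ℂ)
    (hw_cont : ∀ lam : ℂ, ContinuousOn (w lam) I)
    (hw_int : ∀ lam : ℂ, ∀ x ∈ I,
        IntegrableOn (fun ξ => w lam ξ * (r ξ : ℂ)) (I ∩ Set.Iio x))
    (hw_eq : ∀ lam : ℂ, ∀ x ∈ I, w lam x
        = 1 - lam * ∫ y in I ∩ Set.Iio x,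
            ((p y : ℂ))⁻¹ * ∫ ξ in I ∩ Set.Iio y, w lam ξ * (r ξ : ℂ))
    -- the strictly decreasing sequence a_m ↓ a inside (a,b)
    (aSeq : ℕ → ℝ) (haSeq_mem : ∀ m, aSeq m ∈ I) (haSeq_anti : StrictAnti aSeq)
    (haSeq_lim : Tendsto (fun m => (aSeq m : EReal)) atTop (𝓝 a))
    -- the solutions w_{λ,m} on (a_m, b), characterized by the integral equation from a_m
    (wm : ℂ → ℕ → ℝ → ℂ)
    (hwm_cont : ∀ lam : ℂ, ∀ m, ContinuousOn (wm lam m) (I ∩ Set.Ici (aSeq m)))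
    (hwm_eq : ∀ lam : ℂ, ∀ m, ∀ x ∈ I, aSeq m ≤ x → wm lam m x
        = 1 - lam * ∫ y in Set.Ioo (aSeq m) x,
            ((p y : ℂ))⁻¹ * ∫ ξ in Set.Ioo (aSeq m) y, wm lam m ξ * (r ξ : ℂ)) :
    ∀ lam : ℂ, ∀ x ∈ I,
      Tendsto (fun m => wm lam m x) atTop (𝓝 (w lam x)) := by
  intro lam x0 hx0
  classical
  -- ### basic structure of I
  have hIopen : IsOpen I := by
    rw [hI]
    exact (isOpen_Ioo (a := a) (b := b)).preimage continuous_coe_real_ereal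
  have hImeas : MeasurableSet I := hIopen.measurableSet
  have hconv : ∀ u ∈ I, ∀ v ∈ I, ∀ t : ℝ, u ≤ t → t ≤ v → t ∈ I := by
    intro u hu v hv t h1 h2
    rw [hI] at hu hv ⊢
    exact ⟨lt_of_lt_of_le hu.1 (EReal.coe_le_coe_iff.2 h1),
      lt_of_le_of_lt (EReal.coe_le_coe_iff.2 h2) hv.2⟩
  have hev : ∀ z : ℝ, z ∈ I → ∀ᶠ m in atTop, aSeq m < z := by
    intro z hz
    have hz' : a < (z : EReal) := by rw [hI] at hz; exact hz.1
    exact (haSeq_lim.eventually_lt_const hz').mono fun m hm => EReal.coe_lt_coe_iff.1 hm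
  -- ### continuity and positivity of coefficients
  have hpc : ContinuousOn p I := locAC_continuousOn' hIopen hpAC
  have hrc : ContinuousOn r I := locAC_continuousOn' hIopen hrAC
  have hpinvc : ContinuousOn (fun y => (p y)⁻¹) I :=
    hpc.inv₀ fun y hy => (hp y hy).ne'
  set pI : ℝ → ℝ := I.indicator (fun y => (p y)⁻¹) with hpIdef
  set rI : ℝ → ℝ := I.indicator r with hrIdef
  have hpImeas : Measurable pI := measurable_indicator_of_continuousOn hIopen hpinvc
  have hrImeas : Measurable rI := measurable_indicator_of_continuousOn hIopen hrc
  have hpIeq : ∀ y ∈ I, pI y = (p y)⁻¹ := fun y hy => Set.indicator_of_mem hy _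
  have hrIeq : ∀ y ∈ I, rI y = r y := fun y hy => Set.indicator_of_mem hy _
  -- ### reference points
  obtain ⟨m1, hm1⟩ : ∃ m1, aSeq m1 < c ∧ aSeq m1 < x0 :=
    ((hev c hc).and (hev x0 hx0)).exists
  set d := aSeq m1 with hddef
  have hdI : d ∈ I := haSeq_mem m1
  have hdc : d < c := hm1.1
  have hdx0 : d < x0 := hm1.2
  -- ### boundedness of w near a (Lemma A)
  obtain ⟨M, hM0, hMw⟩ : ∃ M : ℝ, 0 ≤ M ∧ ∀ ξ ∈ I ∩ Set.Iic x0, ‖w lam ξ‖ ≤ M := by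
    by_cases hcase : ∀ t ∈ I, ¬ IntegrableOn
        (fun y => ((p y : ℂ))⁻¹ * ∫ ξ in I ∩ Set.Iio y, w lam ξ * (r ξ : ℂ))
        (I ∩ Set.Iio t) volume
    · refine ⟨1, zero_le_one, fun ξ hξ => ?_⟩
      have h1 := hw_eq lam ξ hξ.1
      rw [integral_undef (hcase ξ hξ.1)] at h1
      simp only [mul_zero, sub_zero] at h1
      rw [h1]; norm_num
    · push_neg at hcase
      obtain ⟨t₀, ht₀I, ht₀⟩ := hcase
      set M₀ := 1 + ‖lam‖ * ∫ y in I ∩ Set.Iio t₀,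
        ‖((p y : ℂ))⁻¹ * ∫ ξ in I ∩ Set.Iio y, w lam ξ * (r ξ : ℂ)‖ with hM₀def
      have hM₀bound : ∀ ξ ∈ I ∩ Set.Iic t₀, ‖w lam ξ‖ ≤ M₀ := by
        intro ξ hξ
        rw [hw_eq lam ξ hξ.1]
        refine le_trans (norm_sub_le _ _) ?_
        rw [norm_one, norm_mul, hM₀def]
        have h2 : ‖∫ y in I ∩ Set.Iio ξ,
            ((p y : ℂ))⁻¹ * ∫ ζ in I ∩ Set.Iio y, w lam ζ * (r ζ : ℂ)‖
            ≤ ∫ y in I ∩ Set.Iio t₀,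
            ‖((p y : ℂ))⁻¹ * ∫ ζ in I ∩ Set.Iio y, w lam ζ * (r ζ : ℂ)‖ := by
          refine le_trans (norm_integral_le_integral_norm _) ?_
          refine setIntegral_mono_set ht₀.norm ?_ ?_
          · exact ae_of_all _ fun y => norm_nonneg _
          · exact HasSubset.Subset.eventuallyLE
              (Set.inter_subset_inter_right _ (Set.Iio_subset_Iio hξ.2))
        have h3 : 0 ≤ ‖lam‖ := norm_nonneg _
        nlinarith [norm_nonneg (∫ y in I ∩ Set.Iio ξ,
          ((p y : ℂ))⁻¹ * ∫ ζ in I ∩ Set.Iio y, w lam ζ * (r ζ : ℂ))]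
      rcases le_or_gt x0 t₀ with hx0t₀ | ht₀x0
      · refine ⟨max M₀ 0, le_max_right _ _, fun ξ hξ => ?_⟩
        exact le_trans (hM₀bound ξ ⟨hξ.1, le_trans hξ.2 hx0t₀⟩) (le_max_left _ _)
      · have hsub : Set.Icc t₀ x0 ⊆ I := fun ξ hξ => hconv t₀ ht₀I x0 hx0 ξ hξ.1 hξ.2
        obtain ⟨M₁, hM₁⟩ := (isCompact_Icc (a := t₀) (b := x0)).exists_bound_of_continuousOn
          ((hw_cont lam).mono hsub)
        refine ⟨max (max M₀ M₁) 0, le_max_right _ _, fun ξ hξ => ?_⟩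
        rcases le_or_gt ξ t₀ with h | h
        · exact le_trans (hM₀bound ξ ⟨hξ.1, h⟩)
            (le_trans (le_max_left _ _) (le_max_left _ _))
        · exact le_trans (hM₁ ξ ⟨h.le, hξ.2⟩)
            (le_trans (le_max_right _ _) (le_max_left _ _))
  -- ### the kernel and its ENNReal size
  set Pinf : ℝ → ℝ≥0∞ := fun ξ => ∫⁻ y in Set.Ioo ξ x0, ENNReal.ofReal (pI y) with hPinfdef
  have hPanti : Antitone Pinf := fun ξ₁ ξ₂ h =>
    lintegral_mono_set (Set.Ioo_subset_Ioo_left h)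
  have hPmeas : Measurable Pinf := hPanti.measurable
  set k : ℝ → ℝ≥0∞ := fun ξ => ENNReal.ofReal (rI ξ) * Pinf ξ with hkdef
  have hkmeas : Measurable k := (hrImeas.ennreal_ofReal).mul hPmeas
  -- finiteness of ∫ ofReal pI over compact-in-I intervals
  have hcompact_fin : ∀ α β : ℝ, α ∈ I → β ∈ I → α ≤ β →
      (∫⁻ y in Set.Ioo α β, ENNReal.ofReal (pI y)) < ⊤ := by
    intro α β hα hβ hαβ
    have hsub : Set.Icc α β ⊆ I := fun ξ hξ => hconv α hα β hβ ξ hξ.1 hξ.2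
    obtain ⟨Cp, hCp⟩ := (isCompact_Icc (a := α) (b := β)).exists_bound_of_continuousOn
      (hpinvc.mono hsub)
    calc ∫⁻ y in Set.Ioo α β, ENNReal.ofReal (pI y)
        ≤ ∫⁻ _ in Set.Ioo α β, ENNReal.ofReal Cp := by
          refine setLIntegral_mono' measurableSet_Ioo fun y hy => ?_
          refine ENNReal.ofReal_le_ofReal ?_
          rw [hpIeq y (hsub (Set.Ioo_subset_Icc_self hy))]
          exact le_trans (le_abs_self _)
            (le_trans (le_of_eq (Real.norm_eq_abs _).symm) (hCp y (Set.Ioo_subset_Icc_self hy)))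
      _ = ENNReal.ofReal Cp * volume (Set.Ioo α β) := setLIntegral_const _ _
      _ < ⊤ := by
          rw [Real.volume_Ioo]
          exact ENNReal.mul_lt_top ENNReal.ofReal_lt_top ENNReal.ofReal_lt_top
  -- the c-version of Pinf, controlled by hleft
  set Pc : ℝ → ℝ≥0∞ := fun ξ => ∫⁻ y in Set.Ioo ξ c, ENNReal.ofReal (pI y) with hPcdef
  have hPcanti : Antitone Pc := fun ξ₁ ξ₂ h =>
    lintegral_mono_set (Set.Ioo_subset_Ioo_left h)
  have hleft' : ∫⁻ ξ in I ∩ Set.Iio d, ENNReal.ofReal (rI ξ) * Pc ξ < ⊤ := by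
    refine lt_of_le_of_lt (le_trans (lintegral_mono_set
      (Set.inter_subset_inter_right _ (Set.Iio_subset_Iio hdc.le))) (le_of_eq ?_)) hleft
    refine setLIntegral_congr_fun (hImeas.inter measurableSet_Iio) (fun y hy => ?_)
    rw [hrIeq y hy.1, mul_comm]
    congr 1
    refine setLIntegral_congr_fun measurableSet_Ioo (fun x hx => ?_)
    rw [hpIeq x (hconv y hy.1 c hc x hx.1.le hx.2.le)]
  have hPcd_fin : Pc d < ⊤ := hcompact_fin d c hdI hc hdc.le
  have hPcd_pos : 0 < Pc d := by
    have hsub : Set.Icc d c ⊆ I := fun ξ hξ => hconv d hdI c hc ξ hξ.1 hξ.2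
    obtain ⟨ξ₀, hξ₀, hmin⟩ := (isCompact_Icc (a := d) (b := c)).exists_isMinOn
      ⟨d, le_refl d, hdc.le⟩ (hpinvc.mono hsub)
    have hξ₀pos : 0 < (p ξ₀)⁻¹ := inv_pos.2 (hp ξ₀ (hsub hξ₀))
    calc (0 : ℝ≥0∞) < ENNReal.ofReal ((p ξ₀)⁻¹) * volume (Set.Ioo d c) := by
          rw [Real.volume_Ioo]
          exact ENNReal.mul_pos (ENNReal.ofReal_pos.2 hξ₀pos).ne'
            (ENNReal.ofReal_pos.2 (by linarith)).ne'
      _ = ∫⁻ _ in Set.Ioo d c, ENNReal.ofReal ((p ξ₀)⁻¹) := (setLIntegral_const _ _).symm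
      _ ≤ Pc d := by
          refine setLIntegral_mono' measurableSet_Ioo fun y hy => ?_
          refine ENNReal.ofReal_le_ofReal ?_
          rw [hpIeq y (hsub (Set.Ioo_subset_Icc_self hy))]
          exact hmin (Set.Ioo_subset_Icc_self hy)
  have hrint : ∫⁻ ξ in I ∩ Set.Iio d, ENNReal.ofReal (rI ξ) < ⊤ := by
    have hstep : ∀ ξ ∈ I ∩ Set.Iio d, ENNReal.ofReal (rI ξ)
        ≤ (Pc d)⁻¹ * (ENNReal.ofReal (rI ξ) * Pc ξ) := by
      intro ξ hξ
      have h1 : Pc d ≤ Pc ξ := hPcanti hξ.2.le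
      calc ENNReal.ofReal (rI ξ) = (Pc d)⁻¹ * Pc d * ENNReal.ofReal (rI ξ) := by
            rw [ENNReal.inv_mul_cancel hPcd_pos.ne' hPcd_fin.ne, one_mul]
        _ ≤ (Pc d)⁻¹ * Pc ξ * ENNReal.ofReal (rI ξ) := by
            exact mul_le_mul_left (mul_le_mul_right h1 _) _
        _ = (Pc d)⁻¹ * (ENNReal.ofReal (rI ξ) * Pc ξ) := by ring
    calc ∫⁻ ξ in I ∩ Set.Iio d, ENNReal.ofReal (rI ξ)
        ≤ ∫⁻ ξ in I ∩ Set.Iio d, (Pc d)⁻¹ * (ENNReal.ofReal (rI ξ) * Pc ξ) :=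
          setLIntegral_mono' (hImeas.inter measurableSet_Iio) hstep
      _ = (Pc d)⁻¹ * ∫⁻ ξ in I ∩ Set.Iio d, ENNReal.ofReal (rI ξ) * Pc ξ := by
          exact lintegral_const_mul'' _ (((hrImeas.ennreal_ofReal).mul
            (hPcanti.measurable)).aemeasurable)
      _ < ⊤ := ENNReal.mul_lt_top (ENNReal.inv_lt_top.2 hPcd_pos) hleft'
  -- total kernel mass is finite
  have hLfull : ∫⁻ ξ in I ∩ Set.Iio x0, k ξ < ⊤ := by
    have hsplit : I ∩ Set.Iio x0 ⊆ (I ∩ Set.Iio d) ∪ Set.Ico d x0 := by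
      intro ξ hξ
      rcases lt_or_ge ξ d with h | h
      · exact Or.inl ⟨hξ.1, h⟩
      · exact Or.inr ⟨h, hξ.2⟩
    have hPinf_le : ∀ ξ < d, Pinf ξ ≤ Pc ξ + Pinf d := by
      intro ξ hξ
      have hcover : Set.Ioo ξ x0 ⊆ Set.Ioo ξ c ∪ Set.Ioo d x0 := by
        intro y hy
        rcases lt_or_ge y c with h | h
        · exact Or.inl ⟨hy.1, h⟩
        · exact Or.inr ⟨lt_of_lt_of_le hdc h, hy.2⟩
      calc Pinf ξ ≤ ∫⁻ y in Set.Ioo ξ c ∪ Set.Ioo d x0, ENNReal.ofReal (pI y) :=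
            lintegral_mono_set hcover
        _ ≤ Pc ξ + Pinf d := by
            refine le_trans (lintegral_mono' (Measure.restrict_union_le _ _) le_rfl)
              (le_of_eq ?_)
            rw [lintegral_add_measure]
    have hpart1 : ∫⁻ ξ in I ∩ Set.Iio d, k ξ < ⊤ := by
      have hbound : ∀ ξ ∈ I ∩ Set.Iio d, k ξ
          ≤ ENNReal.ofReal (rI ξ) * Pc ξ + Pinf d * ENNReal.ofReal (rI ξ) := by
        intro ξ hξ
        calc k ξ = ENNReal.ofReal (rI ξ) * Pinf ξ := rfl
          _ ≤ ENNReal.ofReal (rI ξ) * (Pc ξ + Pinf d) :=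
            mul_le_mul_right (hPinf_le ξ hξ.2) _
          _ = ENNReal.ofReal (rI ξ) * Pc ξ + Pinf d * ENNReal.ofReal (rI ξ) := by ring
      calc ∫⁻ ξ in I ∩ Set.Iio d, k ξ
          ≤ ∫⁻ ξ in I ∩ Set.Iio d,
            (ENNReal.ofReal (rI ξ) * Pc ξ + Pinf d * ENNReal.ofReal (rI ξ)) :=
            setLIntegral_mono' (hImeas.inter measurableSet_Iio) hbound
        _ = (∫⁻ ξ in I ∩ Set.Iio d, ENNReal.ofReal (rI ξ) * Pc ξ)
            + ∫⁻ ξ in I ∩ Set.Iio d, Pinf d * ENNReal.ofReal (rI ξ) := by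
            exact lintegral_add_left' (((hrImeas.ennreal_ofReal).mul
              hPcanti.measurable).aemeasurable) _
        _ < ⊤ := by
            refine ENNReal.add_lt_top.2 ⟨hleft', ?_⟩
            rw [lintegral_const_mul'' _ (hrImeas.ennreal_ofReal).aemeasurable]
            exact ENNReal.mul_lt_top (hcompact_fin d x0 hdI hx0 hdx0.le) hrint
    have hpart2 : ∫⁻ ξ in Set.Ico d x0, k ξ < ⊤ := by
      have hsub2 : Set.Icc d x0 ⊆ I := fun ξ hξ => hconv d hdI x0 hx0 ξ hξ.1 hξ.2
      obtain ⟨Cr, hCr⟩ := (isCompact_Icc (a := d) (b := x0)).exists_bound_of_continuousOn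
        (hrc.mono hsub2)
      have hbound : ∀ ξ ∈ Set.Ico d x0, k ξ ≤ ENNReal.ofReal Cr * Pinf d := by
        intro ξ hξ
        have hξI : ξ ∈ I := hsub2 ⟨hξ.1, hξ.2.le⟩
        calc k ξ = ENNReal.ofReal (rI ξ) * Pinf ξ := rfl
          _ ≤ ENNReal.ofReal Cr * Pinf d := by
              refine mul_le_mul' (ENNReal.ofReal_le_ofReal ?_) (hPanti hξ.1)
              rw [hrIeq ξ hξI]
              exact le_trans (le_abs_self _) (le_trans (le_of_eq (Real.norm_eq_abs _).symm)
                (hCr ξ ⟨hξ.1, hξ.2.le⟩))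
      calc ∫⁻ ξ in Set.Ico d x0, k ξ
          ≤ ∫⁻ _ in Set.Ico d x0, ENNReal.ofReal Cr * Pinf d :=
            setLIntegral_mono' measurableSet_Ico hbound
        _ = ENNReal.ofReal Cr * Pinf d * volume (Set.Ico d x0) := setLIntegral_const _ _
        _ < ⊤ := by
            rw [Real.volume_Ico]
            exact ENNReal.mul_lt_top
              (ENNReal.mul_lt_top ENNReal.ofReal_lt_top (hcompact_fin d x0 hdI hx0 hdx0.le))
              ENNReal.ofReal_lt_top
    calc ∫⁻ ξ in I ∩ Set.Iio x0, k ξ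
        ≤ ∫⁻ ξ in (I ∩ Set.Iio d) ∪ Set.Ico d x0, k ξ := lintegral_mono_set hsplit
      _ ≤ (∫⁻ ξ in I ∩ Set.Iio d, k ξ) + ∫⁻ ξ in Set.Ico d x0, k ξ := by
          refine le_trans (lintegral_mono' (Measure.restrict_union_le _ _) le_rfl)
            (le_of_eq ?_)
          rw [lintegral_add_measure]
      _ < ⊤ := ENNReal.add_lt_top.2 ⟨hpart1, hpart2⟩

  -- ### splitting of integrals at aSeq m
  have hIntSplit : ∀ (F : ℝ → ℂ) (α t : ℝ), α ∈ I → t ∈ I → α ≤ t →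
      IntegrableOn F (I ∩ Set.Iio t) volume →
      ∫ y in I ∩ Set.Iio t, F y = (∫ y in I ∩ Set.Iio α, F y) + ∫ y in Set.Ioo α t, F y := by
    intro F α t hα ht hαt hint
    have hico : Set.Ico α t ⊆ I ∩ Set.Iio t := fun ξ hξ =>
      ⟨hconv α hα t ht ξ hξ.1 hξ.2.le, hξ.2⟩
    have hio : I ∩ Set.Iio α ⊆ I ∩ Set.Iio t :=
      Set.inter_subset_inter_right _ (Set.Iio_subset_Iio hαt)
    have hsplit : I ∩ Set.Iio t = (I ∩ Set.Iio α) ∪ Set.Ico α t := by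
      ext ξ
      constructor
      · rintro ⟨h1, h2⟩
        rcases lt_or_ge ξ α with h | h
        · exact Or.inl ⟨h1, h⟩
        · exact Or.inr ⟨h, h2⟩
      · rintro (⟨h1, h2⟩ | h1)
        · exact ⟨h1, lt_of_lt_of_le h2 hαt⟩
        · exact hico h1
    rw [hsplit, setIntegral_union
      (Set.disjoint_left.2 fun ξ h1 h2 => absurd h1.2 (not_lt.2 h2.1))
      measurableSet_Ico (hint.mono_set hio) (hint.mono_set hico),
      integral_Ico_eq_integral_Ioo]
  -- ### continuity of the primitive g: y ↦ ∫_{I ∩ Iio y} w·r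
  have hg_cont : ContinuousOn (fun y => ∫ ξ in I ∩ Set.Iio y, w lam ξ * (r ξ : ℂ))
      (I ∩ Set.Iio x0) := by
    intro y hy
    obtain ⟨n, hn⟩ := (hev y hy.1).exists
    have hAnI : aSeq n ∈ I := haSeq_mem n
    have hsub : Set.Icc (aSeq n) x0 ⊆ I := fun ξ hξ => hconv _ hAnI _ hx0 _ hξ.1 hξ.2
    have hint : IntegrableOn (fun ξ => w lam ξ * (r ξ : ℂ)) (Set.Icc (aSeq n) x0) :=
      ContinuousOn.integrableOn_compact isCompact_Icc
        (((hw_cont lam).mono hsub).mul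
          (Complex.continuous_ofReal.comp_continuousOn (hrc.mono hsub)))
    have hprim : ContinuousOn (fun t => ∫ ξ in Set.Ioo (aSeq n) t, w lam ξ * (r ξ : ℂ))
        (Set.Icc (aSeq n) x0) := cont_primitive hint
    have heq : ∀ t ∈ Set.Icc (aSeq n) x0,
        (∫ ξ in I ∩ Set.Iio t, w lam ξ * (r ξ : ℂ))
          = (∫ ξ in I ∩ Set.Iio (aSeq n), w lam ξ * (r ξ : ℂ))
            + ∫ ξ in Set.Ioo (aSeq n) t, w lam ξ * (r ξ : ℂ) := by
      intro t ht
      have htI : t ∈ I := hsub ht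
      exact hIntSplit _ (aSeq n) t hAnI htI ht.1 (hw_int lam t htI)
    have hcont2 : ContinuousOn (fun t => ∫ ξ in I ∩ Set.Iio t, w lam ξ * (r ξ : ℂ))
        (Set.Icc (aSeq n) x0) := by
      have hc3 := (continuousOn_const
        (c := ∫ ξ in I ∩ Set.Iio (aSeq n), w lam ξ * (r ξ : ℂ))).add hprim
      exact hc3.congr heq
    exact (hcont2.continuousAt (Icc_mem_nhds hn hy.2)).continuousWithinAt
  -- ### the function Fc and its integrability on I ∩ Iio x0
  set Fc : ℝ → ℂ := fun y => ((p y : ℂ))⁻¹ * ∫ ξ in I ∩ Set.Iio y, w lam ξ * (r ξ : ℂ)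
    with hFcdef
  have hFc_cont : ContinuousOn Fc (I ∩ Set.Iio x0) := by
    have h1 : ContinuousOn (fun y => ((p y : ℂ))⁻¹) (I ∩ Set.Iio x0) :=
      (Complex.continuous_ofReal.comp_continuousOn
        (hpc.mono Set.inter_subset_left)).inv₀
        fun y hy => Complex.ofReal_ne_zero.2 (hp y hy.1).ne'
    exact h1.mul hg_cont
  have hnormFc : ∀ y ∈ I ∩ Set.Iio x0, ENNReal.ofReal ‖Fc y‖
      ≤ ENNReal.ofReal (pI y) * (ENNReal.ofReal M *
        ∫⁻ ξ in (I ∩ Set.Iio x0) ∩ Set.Iio y, ENNReal.ofReal (rI ξ)) := by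
    intro y hy
    have hyI := hy.1
    have hset : (I ∩ Set.Iio x0) ∩ Set.Iio y = I ∩ Set.Iio y := by
      ext ξ
      constructor
      · rintro ⟨⟨h1, _⟩, h3⟩; exact ⟨h1, h3⟩
      · rintro ⟨h1, h2⟩; exact ⟨⟨h1, Set.mem_Iio.2 (lt_trans h2 (Set.mem_Iio.1 hy.2))⟩, h2⟩
    rw [hset]
    have h1 : ‖Fc y‖ = (p y)⁻¹ * ‖∫ ξ in I ∩ Set.Iio y, w lam ξ * (r ξ : ℂ)‖ := by
      rw [hFcdef]
      simp only
      rw [norm_mul, norm_inv, Complex.norm_real, Real.norm_eq_abs, abs_of_pos (hp y hyI)]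
    rw [h1, ENNReal.ofReal_mul (inv_nonneg.2 (hp y hyI).le), ← hpIeq y hyI]
    refine mul_le_mul_right ?_ _
    refine le_trans (ofReal_norm_integral_le _ _) ?_
    rw [← lintegral_const_mul'' _ (hrImeas.ennreal_ofReal).aemeasurable]
    refine setLIntegral_mono' (hImeas.inter measurableSet_Iio) fun ξ hξ => ?_
    have hξI := hξ.1
    have hξx0 : ξ ∈ I ∩ Set.Iic x0 :=
      ⟨hξI, Set.mem_Iic.2 (lt_trans (Set.mem_Iio.1 hξ.2) (Set.mem_Iio.1 hy.2)).le⟩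
    rw [norm_mul, Complex.norm_real, Real.norm_eq_abs, abs_of_pos (hr ξ hξI), hrIeq ξ hξI,
      ← ENNReal.ofReal_mul hM0]
    exact ENNReal.ofReal_le_ofReal (mul_le_mul_of_nonneg_right (hMw ξ hξx0) (hr ξ hξI).le)
  have hFc_int : IntegrableOn Fc (I ∩ Set.Iio x0) volume := by
    constructor
    · exact hFc_cont.aestronglyMeasurable (hImeas.inter measurableSet_Iio)
    · rw [hasFiniteIntegral_iff_norm]
      have hmono : Monotone (fun y => ∫⁻ ξ in (I ∩ Set.Iio x0) ∩ Set.Iio y,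
          ENNReal.ofReal (rI ξ)) := fun y1 y2 h =>
        lintegral_mono_set (Set.inter_subset_inter_right _ (Set.Iio_subset_Iio h))
      calc ∫⁻ y in I ∩ Set.Iio x0, ENNReal.ofReal ‖Fc y‖
          ≤ ∫⁻ y in I ∩ Set.Iio x0, ENNReal.ofReal M * (ENNReal.ofReal (pI y) *
            ∫⁻ ξ in (I ∩ Set.Iio x0) ∩ Set.Iio y, ENNReal.ofReal (rI ξ)) := by
            refine setLIntegral_mono' (hImeas.inter measurableSet_Iio) fun y hy => ?_
            refine le_trans (hnormFc y hy) (le_of_eq ?_)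
            ring
        _ = ENNReal.ofReal M * ∫⁻ y in I ∩ Set.Iio x0, ENNReal.ofReal (pI y) *
            ∫⁻ ξ in (I ∩ Set.Iio x0) ∩ Set.Iio y, ENNReal.ofReal (rI ξ) := by
            exact lintegral_const_mul'' _
              ((hpImeas.ennreal_ofReal).mul hmono.measurable).aemeasurable
        _ = ENNReal.ofReal M * ∫⁻ ξ in I ∩ Set.Iio x0, ENNReal.ofReal (rI ξ) *
            ∫⁻ y in (I ∩ Set.Iio x0) ∩ Set.Ioi ξ, ENNReal.ofReal (pI y) := by
            rw [lint_swap (hImeas.inter measurableSet_Iio)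
              (hpImeas.ennreal_ofReal).aemeasurable (hrImeas.ennreal_ofReal).aemeasurable]
        _ = ENNReal.ofReal M * ∫⁻ ξ in I ∩ Set.Iio x0, k ξ := by
            congr 1
            refine setLIntegral_congr_fun (hImeas.inter measurableSet_Iio)
              (fun ξ hξ => ?_)
            have hset : (I ∩ Set.Iio x0) ∩ Set.Ioi ξ = Set.Ioo ξ x0 := by
              ext y
              constructor
              · rintro ⟨⟨_, h2⟩, h3⟩; exact ⟨h3, h2⟩
              · rintro ⟨h1, h2⟩
                exact ⟨⟨hconv ξ hξ.1 x0 hx0 y h1.le h2.le, h2⟩, h1⟩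
            rw [hset]
        _ < ⊤ := ENNReal.mul_lt_top ENNReal.ofReal_lt_top hLfull
  -- ### error quantities
  set lamE : ℝ≥0∞ := ENNReal.ofReal ‖lam‖ with hlamEdef
  have hlamE_ne : lamE ≠ ⊤ := ENNReal.ofReal_ne_top
  set Φt : ℕ → ℝ≥0∞ := fun m => ∫⁻ y in I ∩ Set.Iio (aSeq m), ENNReal.ofReal ‖Fc y‖ with hΦtdef
  set HMt : ℕ → ℝ≥0∞ :=
    fun m => ∫⁻ ξ in I ∩ Set.Iio (aSeq m), ENNReal.ofReal ‖w lam ξ * (r ξ : ℂ)‖ with hHMtdef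
  set Em : ℕ → ℝ≥0∞ := fun m => lamE * (Φt m + Pinf (aSeq m) * HMt m) with hEmdef
  have hFcfin : ∫⁻ y in I ∩ Set.Iio x0, ENNReal.ofReal ‖Fc y‖ < ⊤ :=
    (hasFiniteIntegral_iff_norm Fc).1 hFc_int.2
  have hEm_ne : ∀ m : ℕ, aSeq m ≤ x0 → Em m ≠ ⊤ := by
    intro m hm
    have h1 : Φt m ≠ ⊤ := by
      refine (lt_of_le_of_lt (lintegral_mono_set
        (Set.inter_subset_inter_right _ (Set.Iio_subset_Iio hm))) hFcfin).ne
    have h2 : HMt m ≠ ⊤ := by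
      have h3 := (hw_int lam (aSeq m) (haSeq_mem m)).2
      rw [hasFiniteIntegral_iff_norm] at h3
      exact h3.ne
    have h3 : Pinf (aSeq m) ≠ ⊤ := (hcompact_fin _ _ (haSeq_mem m) hx0 hm).ne
    rw [hEmdef]
    exact ENNReal.mul_ne_top hlamE_ne
      (ENNReal.add_ne_top.2 ⟨h1, ENNReal.mul_ne_top h3 h2⟩)

  -- ### the main integral inequality (Grönwall-type)
  have hMain : ∀ m : ℕ, aSeq m < x0 → ∀ t ∈ Set.Icc (aSeq m) x0,
      ENNReal.ofReal ‖wm lam m t - w lam t‖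
        ≤ Em m + ∫⁻ ξ in Set.Ioo (aSeq m) t,
            (lamE * k ξ) * ENNReal.ofReal ‖wm lam m ξ - w lam ξ‖ := by
    intro m hmx0 t ht
    obtain ⟨hAt, htx0⟩ := ht
    have hAmI : aSeq m ∈ I := haSeq_mem m
    have htI : t ∈ I := hconv _ hAmI _ hx0 _ hAt htx0
    have hIccsub : Set.Icc (aSeq m) x0 ⊆ I := fun ξ hξ => hconv _ hAmI _ hx0 _ hξ.1 hξ.2
    have hIoot_sub : Set.Ioo (aSeq m) t ⊆ I ∩ Set.Iio x0 := fun ξ hξ =>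
      ⟨hIccsub ⟨hξ.1.le, (lt_of_lt_of_le hξ.2 htx0).le⟩, lt_of_lt_of_le hξ.2 htx0⟩
    have hsubIoo : Set.Ioo (aSeq m) t ⊆ Set.Icc (aSeq m) x0 := fun ξ hξ =>
      ⟨hξ.1.le, (lt_of_lt_of_le hξ.2 htx0).le⟩
    -- wm-side objects
    set gm : ℝ → ℂ := fun y => ∫ ξ in Set.Ioo (aSeq m) y, wm lam m ξ * (r ξ : ℂ) with hgmdef
    set Fm : ℝ → ℂ := fun y => ((p y : ℂ))⁻¹ * gm y with hFmdef
    have hwm_contm : ContinuousOn (wm lam m) (Set.Icc (aSeq m) x0) :=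
      (hwm_cont lam m).mono fun ξ hξ => ⟨hIccsub hξ, hξ.1⟩
    have hwmr_cont : ContinuousOn (fun ξ => wm lam m ξ * (r ξ : ℂ)) (Set.Icc (aSeq m) x0) :=
      hwm_contm.mul (Complex.continuous_ofReal.comp_continuousOn (hrc.mono hIccsub))
    have hwmr_int : IntegrableOn (fun ξ => wm lam m ξ * (r ξ : ℂ)) (Set.Icc (aSeq m) x0) :=
      ContinuousOn.integrableOn_compact isCompact_Icc hwmr_cont
    have hgm_cont : ContinuousOn gm (Set.Icc (aSeq m) x0) := by
      rw [hgmdef]; exact cont_primitive hwmr_int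
    have hFm_cont : ContinuousOn Fm (Set.Icc (aSeq m) x0) := by
      rw [hFmdef]
      refine ContinuousOn.mul ?_ hgm_cont
      exact (Complex.continuous_ofReal.comp_continuousOn (hpc.mono hIccsub)).inv₀
        fun y hy => Complex.ofReal_ne_zero.2 (hp y (hIccsub hy)).ne'
    have hFm_int : IntegrableOn Fm (Set.Ioo (aSeq m) t) :=
      (ContinuousOn.integrableOn_compact isCompact_Icc hFm_cont).mono_set hsubIoo
    have hFc_intt : IntegrableOn Fc (Set.Ioo (aSeq m) t) := hFc_int.mono_set hIoot_sub
    -- the two integral equations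
    have hw_tFc : w lam t = 1 - lam * ∫ y in I ∩ Set.Iio t, Fc y := by
      simp only [hFcdef]; exact hw_eq lam t htI
    have hwm_t : wm lam m t = 1 - lam * ∫ y in Set.Ioo (aSeq m) t, Fm y := by
      simp only [hFmdef, hgmdef]; exact hwm_eq lam m t htI hAt
    have hsplit1 : ∫ y in I ∩ Set.Iio t, Fc y
        = (∫ y in I ∩ Set.Iio (aSeq m), Fc y) + ∫ y in Set.Ioo (aSeq m) t, Fc y :=
      hIntSplit Fc (aSeq m) t hAmI htI hAt
        (hFc_int.mono_set (Set.inter_subset_inter_right _ (Set.Iio_subset_Iio htx0)))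
    have hdiff : wm lam m t - w lam t
        = lam * (∫ y in I ∩ Set.Iio (aSeq m), Fc y)
          + lam * ∫ y in Set.Ioo (aSeq m) t, (Fc y - Fm y) := by
      rw [hwm_t, hw_tFc, hsplit1, integral_sub hFc_intt hFm_int]
      ring
    -- measurability of the error function
    have hφmeas : AEMeasurable (fun ξ => ENNReal.ofReal ‖wm lam m ξ - w lam ξ‖)
        (volume.restrict (Set.Ioo (aSeq m) t)) := by
      refine ENNReal.measurable_ofReal.comp_aemeasurable ?_
      refine ContinuousOn.aemeasurable ?_ measurableSet_Ioo
      exact ((hwm_contm.mono hsubIoo).sub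
        ((hw_cont lam).mono fun ξ hξ => hIccsub (hsubIoo hξ))).norm
    -- pointwise bound on Fc - Fm
    have hpoint : ∀ y ∈ Set.Ioo (aSeq m) t, ENNReal.ofReal ‖Fc y - Fm y‖
        ≤ ENNReal.ofReal (pI y) * HMt m
          + ENNReal.ofReal (pI y) * ∫⁻ ξ in Set.Ioo (aSeq m) y,
              ENNReal.ofReal ‖wm lam m ξ - w lam ξ‖ * ENNReal.ofReal (rI ξ) := by
      intro y hy
      have hyI : y ∈ I := (hIoot_sub hy).1
      have hIooy_sub : Set.Ioo (aSeq m) y ⊆ I ∩ Set.Iio y := fun ξ hξ =>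
        ⟨hconv _ hAmI _ hyI _ hξ.1.le hξ.2.le, hξ.2⟩
      have hwr_intIooy : IntegrableOn (fun ξ => w lam ξ * (r ξ : ℂ)) (Set.Ioo (aSeq m) y) :=
        (hw_int lam y hyI).mono_set hIooy_sub
      have hwmr_intIooy : IntegrableOn (fun ξ => wm lam m ξ * (r ξ : ℂ))
          (Set.Ioo (aSeq m) y) := hwmr_int.mono_set fun ξ hξ =>
        ⟨hξ.1.le, (lt_of_lt_of_le (lt_trans hξ.2 hy.2) htx0).le⟩
      have hgsplit : (∫ ξ in I ∩ Set.Iio y, w lam ξ * (r ξ : ℂ))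
          = (∫ ξ in I ∩ Set.Iio (aSeq m), w lam ξ * (r ξ : ℂ))
            + ∫ ξ in Set.Ioo (aSeq m) y, w lam ξ * (r ξ : ℂ) :=
        hIntSplit _ (aSeq m) y hAmI hyI hy.1.le (hw_int lam y hyI)
      have hFcFm : Fc y - Fm y = ((p y : ℂ))⁻¹
          * ((∫ ξ in I ∩ Set.Iio (aSeq m), w lam ξ * (r ξ : ℂ))
            + ∫ ξ in Set.Ioo (aSeq m) y,
                (w lam ξ * (r ξ : ℂ) - wm lam m ξ * (r ξ : ℂ))) := by
        simp only [hFcdef, hFmdef, hgmdef]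
        rw [hgsplit, integral_sub hwr_intIooy hwmr_intIooy]
        ring

      rw [hFcFm]
      set Z := (∫ ξ in I ∩ Set.Iio (aSeq m), w lam ξ * (r ξ : ℂ))
          + ∫ ξ in Set.Ioo (aSeq m) y,
              (w lam ξ * (r ξ : ℂ) - wm lam m ξ * (r ξ : ℂ)) with hZdef
      have h1 : ‖((p y : ℂ))⁻¹ * Z‖ = (p y)⁻¹ * ‖Z‖ := by
        rw [norm_mul, norm_inv, Complex.norm_real, Real.norm_eq_abs, abs_of_pos (hp y hyI)]
      rw [h1, ENNReal.ofReal_mul (inv_nonneg.2 (hp y hyI).le), ← hpIeq y hyI, ← mul_add]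
      refine mul_le_mul_right ?_ _
      have h2 : ENNReal.ofReal ‖Z‖ ≤ ENNReal.ofReal
          ‖∫ ξ in I ∩ Set.Iio (aSeq m), w lam ξ * (r ξ : ℂ)‖
          + ENNReal.ofReal ‖∫ ξ in Set.Ioo (aSeq m) y,
              (w lam ξ * (r ξ : ℂ) - wm lam m ξ * (r ξ : ℂ))‖ := by
        rw [hZdef, ← ENNReal.ofReal_add (norm_nonneg _) (norm_nonneg _)]
        exact ENNReal.ofReal_le_ofReal (norm_add_le _ _)
      refine le_trans h2 (add_le_add ?_ ?_)
      · exact ofReal_norm_integral_le _ _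
      · refine le_trans (ofReal_norm_integral_le _ _) (le_of_eq ?_)
        refine setLIntegral_congr_fun measurableSet_Ioo (fun ξ hξ => ?_)
        have hξI : ξ ∈ I := (hIooy_sub hξ).1
        have heq2 : w lam ξ * (r ξ : ℂ) - wm lam m ξ * (r ξ : ℂ)
            = (w lam ξ - wm lam m ξ) * (r ξ : ℂ) := by ring
        rw [heq2, norm_mul, Complex.norm_real, Real.norm_eq_abs, abs_of_pos (hr ξ hξI),
          ENNReal.ofReal_mul (norm_nonneg _), norm_sub_rev, hrIeq ξ hξI]
    -- integrate the pointwise bound and apply Tonelli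
    have hchain : ∫⁻ y in Set.Ioo (aSeq m) t, ENNReal.ofReal ‖Fc y - Fm y‖
        ≤ Pinf (aSeq m) * HMt m
          + ∫⁻ ξ in Set.Ioo (aSeq m) t, k ξ * ENNReal.ofReal ‖wm lam m ξ - w lam ξ‖ := by
      calc ∫⁻ y in Set.Ioo (aSeq m) t, ENNReal.ofReal ‖Fc y - Fm y‖
          ≤ ∫⁻ y in Set.Ioo (aSeq m) t, (ENNReal.ofReal (pI y) * HMt m
            + ENNReal.ofReal (pI y) * ∫⁻ ξ in Set.Ioo (aSeq m) y,
                ENNReal.ofReal ‖wm lam m ξ - w lam ξ‖ * ENNReal.ofReal (rI ξ)) :=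
            setLIntegral_mono' measurableSet_Ioo hpoint
        _ = (∫⁻ y in Set.Ioo (aSeq m) t, ENNReal.ofReal (pI y) * HMt m)
            + ∫⁻ y in Set.Ioo (aSeq m) t, ENNReal.ofReal (pI y)
              * ∫⁻ ξ in Set.Ioo (aSeq m) y,
                  ENNReal.ofReal ‖wm lam m ξ - w lam ξ‖ * ENNReal.ofReal (rI ξ) :=
            lintegral_add_left' ((hpImeas.ennreal_ofReal).mul_const _).aemeasurable _
        _ ≤ Pinf (aSeq m) * HMt m
            + ∫⁻ ξ in Set.Ioo (aSeq m) t, k ξ * ENNReal.ofReal ‖wm lam m ξ - w lam ξ‖ := by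
          refine add_le_add ?_ ?_
          · rw [lintegral_mul_const'' _ (hpImeas.ennreal_ofReal).aemeasurable]
            exact mul_le_mul_left (lintegral_mono_set (Set.Ioo_subset_Ioo_right htx0)) _
          · have hsweq : ∀ y ∈ Set.Ioo (aSeq m) t,
                Set.Ioo (aSeq m) y = Set.Ioo (aSeq m) t ∩ Set.Iio y := by
              intro y hy
              ext ξ
              constructor
              · rintro ⟨h1, h2⟩; exact ⟨⟨h1, lt_trans h2 hy.2⟩, h2⟩
              · rintro ⟨⟨h1, _⟩, h3⟩; exact ⟨h1, h3⟩
            calc ∫⁻ y in Set.Ioo (aSeq m) t, ENNReal.ofReal (pI y)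
                  * ∫⁻ ξ in Set.Ioo (aSeq m) y,
                      ENNReal.ofReal ‖wm lam m ξ - w lam ξ‖ * ENNReal.ofReal (rI ξ)
                = ∫⁻ y in Set.Ioo (aSeq m) t, ENNReal.ofReal (pI y)
                  * ∫⁻ ξ in Set.Ioo (aSeq m) t ∩ Set.Iio y,
                      ENNReal.ofReal ‖wm lam m ξ - w lam ξ‖ * ENNReal.ofReal (rI ξ) :=
                setLIntegral_congr_fun measurableSet_Ioo
                  (fun y hy => by rw [← hsweq y hy])
              _ = ∫⁻ ξ in Set.Ioo (aSeq m) t,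
                  (ENNReal.ofReal ‖wm lam m ξ - w lam ξ‖ * ENNReal.ofReal (rI ξ))
                  * ∫⁻ y in Set.Ioo (aSeq m) t ∩ Set.Ioi ξ, ENNReal.ofReal (pI y) :=
                lint_swap measurableSet_Ioo (hpImeas.ennreal_ofReal).aemeasurable
                  (hφmeas.mul (hrImeas.ennreal_ofReal).aemeasurable)
              _ ≤ ∫⁻ ξ in Set.Ioo (aSeq m) t, k ξ * ENNReal.ofReal ‖wm lam m ξ - w lam ξ‖ := by
                refine setLIntegral_mono' measurableSet_Ioo fun ξ hξ => ?_
                have hPle : (∫⁻ y in Set.Ioo (aSeq m) t ∩ Set.Ioi ξ, ENNReal.ofReal (pI y))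
                    ≤ Pinf ξ := lintegral_mono_set fun y hy =>
                  ⟨Set.mem_Ioi.1 hy.2, Set.mem_Iio.2 (lt_of_lt_of_le hy.1.2 htx0)⟩
                calc (ENNReal.ofReal ‖wm lam m ξ - w lam ξ‖ * ENNReal.ofReal (rI ξ))
                      * ∫⁻ y in Set.Ioo (aSeq m) t ∩ Set.Ioi ξ, ENNReal.ofReal (pI y)
                    ≤ (ENNReal.ofReal ‖wm lam m ξ - w lam ξ‖ * ENNReal.ofReal (rI ξ))
                      * Pinf ξ := mul_le_mul_right hPle _
                  _ = k ξ * ENNReal.ofReal ‖wm lam m ξ - w lam ξ‖ := by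
                      rw [hkdef]; ring
    -- first norm estimate
    have hstep1 : ENNReal.ofReal ‖wm lam m t - w lam t‖
        ≤ lamE * Φt m + lamE * ∫⁻ y in Set.Ioo (aSeq m) t, ENNReal.ofReal ‖Fc y - Fm y‖ := by
      rw [hdiff]
      refine le_trans (ENNReal.ofReal_le_ofReal (norm_add_le _ _)) ?_
      rw [ENNReal.ofReal_add (norm_nonneg _) (norm_nonneg _), norm_mul, norm_mul,
        ENNReal.ofReal_mul (norm_nonneg lam), ENNReal.ofReal_mul (norm_nonneg lam),
        ← hlamEdef]
      exact add_le_add (mul_le_mul_right (ofReal_norm_integral_le _ _) _)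
        (mul_le_mul_right (ofReal_norm_integral_le _ _) _)
    -- assemble
    have h4 : lamE * ∫⁻ ξ in Set.Ioo (aSeq m) t, k ξ * ENNReal.ofReal ‖wm lam m ξ - w lam ξ‖
        = ∫⁻ ξ in Set.Ioo (aSeq m) t, (lamE * k ξ) * ENNReal.ofReal ‖wm lam m ξ - w lam ξ‖ := by
      rw [← lintegral_const_mul'' lamE (f := fun ξ => k ξ * ENNReal.ofReal ‖wm lam m ξ - w lam ξ‖) (hkmeas.aemeasurable.mul hφmeas)]
      refine lintegral_congr fun ξ => ?_
      ring
    refine le_trans hstep1 ?_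
    refine le_trans (add_le_add (le_refl (lamE * Φt m)) (mul_le_mul_right hchain lamE)) ?_
    rw [mul_add, ← add_assoc, h4]
    refine add_le_add (le_of_eq ?_) le_rfl
    simp only [hEmdef]
    ring
  -- ### tails tend to zero
  have hmemtail : ∀ x ∈ I ∩ Set.Iio x0, ∃ m, aSeq m < x := fun x hx => (hev x hx.1).exists
  have hanti : Antitone aSeq := haSeq_anti.antitone
  have hsetm : ∀ m : ℕ, aSeq m < x0 →
      (I ∩ Set.Iio x0) ∩ Set.Iio (aSeq m) = I ∩ Set.Iio (aSeq m) := by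
    intro m hm
    ext ξ
    constructor
    · rintro ⟨⟨h1, _⟩, h3⟩; exact ⟨h1, h3⟩
    · rintro ⟨h1, h2⟩
      exact ⟨⟨h1, Set.mem_Iio.2 (lt_trans (Set.mem_Iio.1 h2) hm)⟩, h2⟩
  have htailΦ : Tendsto (fun m => ∫⁻ y in (I ∩ Set.Iio x0) ∩ Set.Iio (aSeq m),
      ENNReal.ofReal ‖Fc y‖) atTop (𝓝 0) :=
    tail_tendsto (hImeas.inter measurableSet_Iio) hFcfin.ne hanti hmemtail
  have htailk : Tendsto (fun m => ∫⁻ ξ in (I ∩ Set.Iio x0) ∩ Set.Iio (aSeq m), k ξ)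
      atTop (𝓝 0) :=
    tail_tendsto (hImeas.inter measurableSet_Iio) hLfull.ne hanti hmemtail
  have hEmle : ∀ m : ℕ, aSeq m < x0 → Em m ≤ lamE *
      ((∫⁻ y in (I ∩ Set.Iio x0) ∩ Set.Iio (aSeq m), ENNReal.ofReal ‖Fc y‖)
        + ENNReal.ofReal M * ∫⁻ ξ in (I ∩ Set.Iio x0) ∩ Set.Iio (aSeq m), k ξ) := by
    intro m hm
    rw [hsetm m hm]
    refine mul_le_mul_right (add_le_add le_rfl ?_) _
    have hb1 : HMt m ≤ ENNReal.ofReal M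
        * ∫⁻ ξ in I ∩ Set.Iio (aSeq m), ENNReal.ofReal (rI ξ) := by
      rw [← lintegral_const_mul'' _ (hrImeas.ennreal_ofReal).aemeasurable]
      refine setLIntegral_mono' (hImeas.inter measurableSet_Iio) fun ξ hξ => ?_
      have hξI := hξ.1
      have hξx0 : ξ ∈ I ∩ Set.Iic x0 :=
        ⟨hξI, Set.mem_Iic.2 (lt_trans (Set.mem_Iio.1 hξ.2) hm).le⟩
      rw [norm_mul, Complex.norm_real, Real.norm_eq_abs, abs_of_pos (hr ξ hξI),
        hrIeq ξ hξI, ← ENNReal.ofReal_mul hM0]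
      exact ENNReal.ofReal_le_ofReal (mul_le_mul_of_nonneg_right (hMw ξ hξx0) (hr ξ hξI).le)
    calc Pinf (aSeq m) * HMt m
        ≤ Pinf (aSeq m) * (ENNReal.ofReal M
          * ∫⁻ ξ in I ∩ Set.Iio (aSeq m), ENNReal.ofReal (rI ξ)) := mul_le_mul_right hb1 _
      _ = ENNReal.ofReal M
          * ∫⁻ ξ in I ∩ Set.Iio (aSeq m), Pinf (aSeq m) * ENNReal.ofReal (rI ξ) := by
          rw [lintegral_const_mul'' _ (hrImeas.ennreal_ofReal).aemeasurable]
          ring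
      _ ≤ ENNReal.ofReal M * ∫⁻ ξ in I ∩ Set.Iio (aSeq m), k ξ := by
          refine mul_le_mul_right (setLIntegral_mono' (hImeas.inter measurableSet_Iio)
            fun ξ hξ => ?_) _
          rw [hkdef]
          calc Pinf (aSeq m) * ENNReal.ofReal (rI ξ)
              ≤ Pinf ξ * ENNReal.ofReal (rI ξ) :=
              mul_le_mul_left (hPanti (Set.mem_Iio.1 hξ.2).le) _
            _ = ENNReal.ofReal (rI ξ) * Pinf ξ := mul_comm _ _
  have hEm0 : Tendsto Em atTop (𝓝 0) := by
    have h2 : Tendsto (fun m => ENNReal.ofReal M *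
        ∫⁻ ξ in (I ∩ Set.Iio x0) ∩ Set.Iio (aSeq m), k ξ) atTop (𝓝 0) := by
      have h3 := ENNReal.Tendsto.const_mul (a := ENNReal.ofReal M) htailk
        (Or.inr ENNReal.ofReal_ne_top)
      simpa using h3
    have h3 := htailΦ.add h2
    rw [add_zero] at h3
    have h4 := ENNReal.Tendsto.const_mul h3 (Or.inr hlamE_ne)
    rw [mul_zero] at h4
    refine tendsto_of_tendsto_of_tendsto_of_le_of_le' tendsto_const_nhds h4 ?_ ?_
    · exact Eventually.of_forall fun m => zero_le
    · exact (hev x0 hx0).mono fun m hm => hEmle m hm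
  -- ### the dominating measure ν and its partition
  set kS : ℝ → ℝ≥0∞ := (I ∩ Set.Iio x0).indicator (fun ξ => lamE * k ξ) with hkSdef
  set ν : Measure ℝ := volume.withDensity kS with hνdef
  have hν_eq : ∀ (E : Set ℝ), MeasurableSet E → E ⊆ I ∩ Set.Iio x0 →
      ν E = ∫⁻ ξ in E, lamE * k ξ := by
    intro E hE hEsub
    rw [hνdef, withDensity_apply _ hE]
    exact setLIntegral_congr_fun hE
      (fun ξ hξ => Set.indicator_of_mem (hEsub hξ) _)
  haveI hνfin : IsFiniteMeasure ν := by
    constructor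
    rw [hνdef, withDensity_apply _ MeasurableSet.univ, Measure.restrict_univ, hkSdef,
      lintegral_indicator (hImeas.inter measurableSet_Iio),
      lintegral_const_mul'' _ hkmeas.aemeasurable]
    exact ENNReal.mul_lt_top hlamE_ne.lt_top hLfull
  obtain ⟨m2, hm2small, hm2m1⟩ : ∃ m2, (∫⁻ ξ in (I ∩ Set.Iio x0) ∩ Set.Iio (aSeq m2),
      lamE * k ξ) ≤ ENNReal.ofReal (1/2) ∧ m1 < m2 := by
    have h1 : Tendsto (fun m => ∫⁻ ξ in (I ∩ Set.Iio x0) ∩ Set.Iio (aSeq m), lamE * k ξ)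
        atTop (𝓝 0) := by
      have h0 := ENNReal.Tendsto.const_mul htailk (Or.inr hlamE_ne)
      rw [mul_zero] at h0
      refine h0.congr fun m => ?_
      rw [lintegral_const_mul'' _ hkmeas.aemeasurable]
    have h2 := (ENNReal.tendsto_nhds_zero.1 h1) (ENNReal.ofReal (1/2))
      (ENNReal.ofReal_pos.2 (by norm_num))
    exact (h2.and (eventually_gt_atTop m1)).exists
  set c0 := aSeq m2 with hc0def
  have hc0I : c0 ∈ I := haSeq_mem m2
  have hc0d : c0 < d := haSeq_anti hm2m1
  have hc0x0 : c0 < x0 := lt_trans hc0d hdx0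
  obtain ⟨N, cc, hccmono, hcc0, hccN, hcells⟩ :=
    exists_partition ν (Nat.ceil ((ν (Set.Ioo c0 x0)).toReal * 2)) c0 x0 hc0x0.le
      (by
        have h5 := Nat.le_ceil ((ν (Set.Ioo c0 x0)).toReal * 2)
        linarith)
  have hccle : ∀ i, cc i ≤ x0 := by
    intro i
    rcases le_or_gt i N with h | h
    · calc cc i ≤ cc N := hccmono h
        _ = x0 := hccN N le_rfl
    · rw [hccN i h.le]
  have hccge : ∀ i, c0 ≤ cc i := fun i => hcc0 ▸ hccmono (Nat.zero_le i)
  have hccI : ∀ i, cc i ∈ I := fun i => hconv c0 hc0I x0 hx0 (cc i) (hccge i) (hccle i)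
  have hcellIsub : ∀ j, Set.Ico (cc j) (cc (j+1)) ⊆ I ∩ Set.Iio x0 := by
    intro j ξ hξ
    have h1 : ξ < x0 := lt_of_lt_of_le hξ.2 (hccle (j+1))
    exact ⟨hconv (cc j) (hccI j) x0 hx0 ξ hξ.1 h1.le, Set.mem_Iio.2 h1⟩
  have hν_cell : ∀ j, ν (Set.Ico (cc j) (cc (j+1))) ≤ ENNReal.ofReal (1/2) := by
    intro j
    have h1 : ν (Set.Ico (cc j) (cc (j+1))) ≤ ν (Set.Ioo (cc j) (cc (j+1))) + ν {cc j} := by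
      refine le_trans (measure_mono ?_) (measure_union_le _ _)
      intro ξ hξ
      rcases eq_or_lt_of_le hξ.1 with h | h
      · exact Or.inr (by rw [Set.mem_singleton_iff, ← h])
      · exact Or.inl ⟨h, hξ.2⟩
    have h2 : ν {cc j} = 0 := by
      rw [hνdef, withDensity_apply _ (measurableSet_singleton _),
        Measure.restrict_eq_zero.2 (by simp), lintegral_zero_measure]
    rw [h2, add_zero] at h1
    exact le_trans h1 ((ENNReal.le_ofReal_iff_toReal_le (measure_ne_top _ _)
      (by norm_num)).2 (hcells j))
  -- ### the Grönwall iteration for large m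
  have hfinal : ∀ᶠ m in atTop, ‖wm lam m x0 - w lam x0‖
      ≤ 2 ^ (N + 1) * (Em m).toReal := by
    refine eventually_atTop.2 ⟨m2 + 1, fun m hm => ?_⟩
    have hmm2 : m2 < m := hm
    have hAmc0 : aSeq m < c0 := haSeq_anti hmm2
    have hAmx0 : aSeq m < x0 := lt_trans hAmc0 hc0x0
    have hAmI : aSeq m ∈ I := haSeq_mem m
    have hIccsub : Set.Icc (aSeq m) x0 ⊆ I := fun ξ hξ => hconv _ hAmI _ hx0 _ hξ.1 hξ.2
    have hφcont : ContinuousOn (fun ξ => ‖wm lam m ξ - w lam ξ‖) (Set.Icc (aSeq m) x0) :=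
      (((hwm_cont lam m).mono fun ξ hξ => ⟨hIccsub hξ, hξ.1⟩).sub
        ((hw_cont lam).mono hIccsub)).norm
    obtain ⟨B, hB⟩ := (isCompact_Icc (a := aSeq m) (b := x0)).exists_bound_of_continuousOn
      hφcont
    have hBnn : ∀ ξ ∈ Set.Icc (aSeq m) x0, ‖wm lam m ξ - w lam ξ‖ ≤ B := by
      intro ξ hξ
      have h5 := hB ξ hξ
      rwa [Real.norm_eq_abs, abs_of_nonneg (norm_nonneg _)] at h5
    have hIoosub : ∀ t : ℝ, t ≤ x0 → Set.Ioo (aSeq m) t ⊆ I ∩ Set.Iio x0 := by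
      intro t ht ξ hξ
      have h1 : ξ < x0 := lt_of_lt_of_le hξ.2 ht
      exact ⟨hconv _ hAmI _ hx0 _ hξ.1.le h1.le, Set.mem_Iio.2 h1⟩
    have hfint : ∀ t : ℝ, t ≤ x0 → (∫⁻ ξ in Set.Ioo (aSeq m) t,
        (lamE * k ξ) * ENNReal.ofReal ‖wm lam m ξ - w lam ξ‖) ≠ ⊤ := by
      intro t ht
      have hb : ∀ ξ ∈ Set.Ioo (aSeq m) t,
          (lamE * k ξ) * ENNReal.ofReal ‖wm lam m ξ - w lam ξ‖
          ≤ (lamE * k ξ) * ENNReal.ofReal B := by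
        intro ξ hξ
        refine mul_le_mul_right (ENNReal.ofReal_le_ofReal ?_) _
        exact hBnn ξ ⟨hξ.1.le, (lt_of_lt_of_le hξ.2 ht).le⟩
      have h2 : (∫⁻ ξ in Set.Ioo (aSeq m) t, (lamE * k ξ) * ENNReal.ofReal B) ≠ ⊤ := by
        have h3 : (∫⁻ ξ in Set.Ioo (aSeq m) t, (lamE * k ξ) * ENNReal.ofReal B)
            ≤ lamE * ENNReal.ofReal B * ∫⁻ ξ in I ∩ Set.Iio x0, k ξ := by
          refine le_trans (lintegral_mono_set (hIoosub t ht)) ?_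
          rw [← lintegral_const_mul'' (lamE * ENNReal.ofReal B) hkmeas.aemeasurable]
          refine le_of_eq (lintegral_congr fun ξ => ?_)
          ring
        exact (lt_of_le_of_lt h3 (ENNReal.mul_lt_top
          (ENNReal.mul_lt_top hlamE_ne.lt_top ENNReal.ofReal_lt_top) hLfull)).ne
      exact ne_top_of_le_ne_top h2 (setLIntegral_mono' measurableSet_Ioo hb)
    have hEm_ne' : Em m ≠ ⊤ := hEm_ne m hAmx0.le
    have hreal : ∀ t ∈ Set.Icc (aSeq m) x0, ‖wm lam m t - w lam t‖
        ≤ (Em m).toReal + (∫⁻ ξ in Set.Ioo (aSeq m) t,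
            (lamE * k ξ) * ENNReal.ofReal ‖wm lam m ξ - w lam ξ‖).toReal := by
      intro t ht
      have h1 := hMain m hAmx0 t ht
      have h2 := ENNReal.toReal_mono
        (ENNReal.add_ne_top.2 ⟨hEm_ne', hfint t ht.2⟩) h1
      rw [ENNReal.toReal_ofReal (norm_nonneg _)] at h2
      rwa [ENNReal.toReal_add hEm_ne' (hfint t ht.2)] at h2
    set sN : ℕ → ℝ := fun i =>
      sSup ((fun ξ => ‖wm lam m ξ - w lam ξ‖) '' Set.Icc (aSeq m) (cc i)) with hsNdef
    have hAmcc : ∀ i, aSeq m ≤ cc i := fun i => le_trans hAmc0.le (hccge i)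
    have himgne : ∀ i,
        ((fun ξ => ‖wm lam m ξ - w lam ξ‖) '' Set.Icc (aSeq m) (cc i)).Nonempty :=
      fun i => ⟨_, Set.mem_image_of_mem _ (Set.left_mem_Icc.2 (hAmcc i))⟩
    have himgbdd : ∀ i,
        BddAbove ((fun ξ => ‖wm lam m ξ - w lam ξ‖) '' Set.Icc (aSeq m) (cc i)) := by
      intro i
      refine ⟨B, fun bb hbb => ?_⟩
      obtain ⟨ξ, hξ, rfl⟩ := hbb
      exact hBnn ξ ⟨hξ.1, le_trans hξ.2 (hccle i)⟩
    have hsub_le : ∀ i, ∀ ξ ∈ Set.Icc (aSeq m) (cc i), ‖wm lam m ξ - w lam ξ‖ ≤ sN i :=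
      fun i ξ hξ => le_csSup (himgbdd i) (Set.mem_image_of_mem _ hξ)
    have hsN0 : ∀ i, 0 ≤ sN i :=
      fun i => le_trans (norm_nonneg _) (hsub_le i (aSeq m) (Set.left_mem_Icc.2 (hAmcc i)))
    have hrec : ∀ i ≤ N, sN i ≤ (Em m).toReal
        + (1/2) * ∑ j ∈ Finset.range (i+1), sN j := by
      intro i hi
      refine csSup_le (himgne i) ?_
      rintro bb ⟨t, ht, rfl⟩
      have htIcc : t ∈ Set.Icc (aSeq m) x0 := ⟨ht.1, le_trans ht.2 (hccle i)⟩
      refine le_trans (hreal t htIcc) (add_le_add le_rfl ?_)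
      refine ENNReal.toReal_le_of_le_ofReal
        (mul_nonneg (by norm_num) (Finset.sum_nonneg fun j _ => hsN0 j)) ?_
      have hcover : Set.Ioo (aSeq m) t ⊆ Set.Ioo (aSeq m) c0
          ∪ ⋃ j ∈ Finset.range i, Set.Ico (cc j) (cc (j+1)) := by
        intro ξ hξ
        rcases lt_or_ge ξ c0 with h | h
        · exact Or.inl ⟨hξ.1, h⟩
        · right
          have hP0 : cc 0 ≤ ξ := by rw [hcc0]; exact h
          obtain ⟨jj, hjle, hPjj, hgr⟩ : ∃ jj, jj ≤ i ∧ cc jj ≤ ξ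
              ∧ ∀ kk, jj < kk → kk ≤ i → ¬ cc kk ≤ ξ := by
            refine ⟨Nat.findGreatest (fun j => cc j ≤ ξ) i,
              Nat.findGreatest_le (P := fun j => cc j ≤ ξ) i,
              Nat.findGreatest_spec (P := fun j => cc j ≤ ξ) (Nat.zero_le i) hP0, ?_⟩
            intro kk h1 h2
            exact Nat.findGreatest_is_greatest (P := fun j => cc j ≤ ξ) h1 h2
          have hjlt : jj < i := by
            rcases lt_or_eq_of_le hjle with h' | h'
            · exact h'
            · exfalso
              have h6 : ξ < cc i := lt_of_lt_of_le hξ.2 ht.2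
              rw [← h'] at h6
              exact absurd hPjj (not_le.2 h6)
          have hnext : ξ < cc (jj + 1) :=
            not_le.1 (hgr (jj + 1) (Nat.lt_succ_self jj) (Nat.succ_le_of_lt hjlt))
          exact Set.mem_biUnion (Finset.mem_range.2 hjlt) ⟨hPjj, hnext⟩
      have hbound_piece : ∀ (E : Set ℝ) (j : ℕ), MeasurableSet E →
          E ⊆ Set.Icc (aSeq m) (cc j) → E ⊆ I ∩ Set.Iio x0 →
          (∫⁻ ξ in E, lamE * k ξ) ≤ ENNReal.ofReal (1/2) →
          ∫⁻ ξ in E, (lamE * k ξ) * ENNReal.ofReal ‖wm lam m ξ - w lam ξ‖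
            ≤ ENNReal.ofReal (1/2) * ENNReal.ofReal (sN j) := by
        intro E j hE hEcc hEI hEν
        calc ∫⁻ ξ in E, (lamE * k ξ) * ENNReal.ofReal ‖wm lam m ξ - w lam ξ‖
            ≤ ∫⁻ ξ in E, (lamE * k ξ) * ENNReal.ofReal (sN j) :=
            setLIntegral_mono' hE fun ξ hξ =>
              mul_le_mul_right (ENNReal.ofReal_le_ofReal (hsub_le j ξ (hEcc hξ))) _
          _ = ENNReal.ofReal (sN j) * ∫⁻ ξ in E, lamE * k ξ := by
              rw [lintegral_mul_const'' _ (hkmeas.const_mul lamE).aemeasurable, mul_comm]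
          _ ≤ ENNReal.ofReal (sN j) * ENNReal.ofReal (1/2) := mul_le_mul_right hEν _
          _ = ENNReal.ofReal (1/2) * ENNReal.ofReal (sN j) := mul_comm _ _
      have hpiece0 : ∫⁻ ξ in Set.Ioo (aSeq m) c0,
          (lamE * k ξ) * ENNReal.ofReal ‖wm lam m ξ - w lam ξ‖
          ≤ ENNReal.ofReal (1/2) * ENNReal.ofReal (sN 0) := by
        refine hbound_piece _ 0 measurableSet_Ioo ?_ (hIoosub c0 hc0x0.le) ?_
        · intro ξ hξ
          refine ⟨hξ.1.le, ?_⟩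
          rw [hcc0]
          exact hξ.2.le
        · refine le_trans (lintegral_mono_set ?_) hm2small
          intro ξ hξ
          exact ⟨(hIoosub c0 hc0x0.le) hξ, hξ.2⟩
      have hpiecej : ∀ j, ∫⁻ ξ in Set.Ico (cc j) (cc (j+1)),
          (lamE * k ξ) * ENNReal.ofReal ‖wm lam m ξ - w lam ξ‖
          ≤ ENNReal.ofReal (1/2) * ENNReal.ofReal (sN (j+1)) := by
        intro j
        refine hbound_piece _ (j+1) measurableSet_Ico ?_ (hcellIsub j) ?_
        · intro ξ hξ
          exact ⟨le_trans (hAmcc j) hξ.1, hξ.2.le⟩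
        · rw [← hν_eq _ measurableSet_Ico (hcellIsub j)]
          exact hν_cell j
      calc ∫⁻ ξ in Set.Ioo (aSeq m) t,
            (lamE * k ξ) * ENNReal.ofReal ‖wm lam m ξ - w lam ξ‖
          ≤ ∫⁻ ξ in Set.Ioo (aSeq m) c0 ∪ ⋃ j ∈ Finset.range i, Set.Ico (cc j) (cc (j+1)),
            (lamE * k ξ) * ENNReal.ofReal ‖wm lam m ξ - w lam ξ‖ :=
          lintegral_mono_set hcover
        _ ≤ (∫⁻ ξ in Set.Ioo (aSeq m) c0,
              (lamE * k ξ) * ENNReal.ofReal ‖wm lam m ξ - w lam ξ‖)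
            + ∫⁻ ξ in ⋃ j ∈ Finset.range i, Set.Ico (cc j) (cc (j+1)),
              (lamE * k ξ) * ENNReal.ofReal ‖wm lam m ξ - w lam ξ‖ := by
            refine le_trans (lintegral_mono' (Measure.restrict_union_le _ _) le_rfl)
              (le_of_eq ?_)
            rw [lintegral_add_measure]
        _ ≤ ENNReal.ofReal (1/2) * ENNReal.ofReal (sN 0)
            + ∑ j ∈ Finset.range i, ENNReal.ofReal (1/2) * ENNReal.ofReal (sN (j+1)) :=
            add_le_add hpiece0 (le_trans (lint_union_le _ _ _ i)
              (Finset.sum_le_sum fun j _ => hpiecej j))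
        _ = ENNReal.ofReal ((1/2) * ∑ j ∈ Finset.range (i+1), sN j) := by
            rw [Finset.sum_range_succ', ENNReal.ofReal_mul (by norm_num : (0:ℝ) ≤ 1/2),
              ENNReal.ofReal_add (Finset.sum_nonneg fun j _ => hsN0 (j+1)) (hsN0 0),
              ENNReal.ofReal_sum_of_nonneg fun j _ => hsN0 (j+1),
              mul_add, Finset.mul_sum, add_comm]
    have hgres := gronwall_num ENNReal.toReal_nonneg hrec N le_rfl
    have hx0mem : x0 ∈ Set.Icc (aSeq m) (cc N) := ⟨hAmx0.le, le_of_eq (hccN N le_rfl).symm⟩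
    calc ‖wm lam m x0 - w lam x0‖ ≤ sN N := hsub_le N x0 hx0mem
      _ ≤ 2 ^ (N + 1) * (Em m).toReal := hgres
  -- ### conclusion
  have hElim : Tendsto (fun m => (Em m).toReal) atTop (𝓝 0) := by
    have h1 := (ENNReal.tendsto_toReal ENNReal.zero_ne_top).comp hEm0
    exact h1
  rw [tendsto_iff_norm_sub_tendsto_zero]
  refine squeeze_zero' (Eventually.of_forall fun m => norm_nonneg _) hfinal ?_
  have h2 := hElim.const_mul (2 ^ (N + 1) : ℝ)
  simpa using h2
end
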